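/- arXiv:2506.18103 — 11 statements merged into one kernel-verified Lean document; each statement's English description precedes it below -/
import Mathlib

section
/- Let Z ≥ 2 be an integer, r_A = (Z + √(Z²+4))/2, and a(n) = ⌈n·r_A⌉. Then a(1) = Z+1, and for every k > 1: a(k) − a(k−1) = Z+1 if k ∈ {a(1),...,a(k−1)}, and a(k) − a(k−1) = Z otherwise. In other words, a(n) = ⌈n·r_A⌉ satisfies the self-referential definition of S(Z+1, Z+1, Z). -/
/-- a(n) = ⌈n·r_A⌉ with r_A = (Z+√(Z²+4))/2 satisfies the
self-referential definition of S(Z+1, Z+1, Z). -/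
theorem stmt_3 (Z : ℤ) (hZ : 2 ≤ Z) (rA : ℝ)
    (hrA : rA = ((Z : ℝ) + Real.sqrt ((Z : ℝ) ^ 2 + 4)) / 2)
    (a : ℕ → ℤ) (ha : ∀ n : ℕ, a n = ⌈(n : ℝ) * rA⌉) :
    a 1 = Z + 1 ∧
      ∀ k : ℕ, 2 ≤ k →
        ((∃ j ∈ Finset.Ico 1 k, a j = (k : ℤ)) → a k - a (k - 1) = Z + 1) ∧
        ((¬ ∃ j ∈ Finset.Ico 1 k, a j = (k : ℤ)) → a k - a (k - 1) = Z) := by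
  have hZR : (2:ℝ) ≤ (Z:ℝ) := by exact_mod_cast hZ
  set s : ℝ := Real.sqrt ((Z : ℝ) ^ 2 + 4) with hs
  have hs_nonneg : (0:ℝ) ≤ s := Real.sqrt_nonneg _
  have hs_sq : s ^ 2 = (Z:ℝ) ^ 2 + 4 := Real.sq_sqrt (by positivity)
  have hsZ : (Z:ℝ) < s := by nlinarith
  have hsZ2 : s < (Z:ℝ) + 2 := by nlinarith
  have hrZ : (Z:ℝ) < rA := by rw [hrA]; linarith
  have hrZ1 : rA < (Z:ℝ) + 1 := by rw [hrA]; linarith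
  have hr_pos : (0:ℝ) < rA := by linarith
  have hrr : rA * (rA - Z) = 1 := by rw [hrA]; linear_combination hs_sq / 4
  have hrmZ : (0:ℝ) < rA - Z := by linarith
  -- irrationality
  have hs_irr : Irrational s := by
    apply irrational_nrt_of_notint_nrt 2 (Z ^ 2 + 4)
    · rw [hs_sq]; push_cast; ring
    · rintro ⟨y, hy⟩
      have hyr : (y:ℝ) ^ 2 = (Z:ℝ) ^ 2 + 4 := by rw [← hy]; exact hs_sq
      have hy2 : y ^ 2 = Z ^ 2 + 4 := by exact_mod_cast hyr
      have hy0 : 0 ≤ y := by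
        have : (0:ℝ) ≤ (y:ℝ) := hy ▸ hs_nonneg
        exact_mod_cast this
      have h1 : Z + 1 ≤ y := by nlinarith
      nlinarith
    · norm_num
  have hr_irr : Irrational rA := by
    rw [hrA]
    have h1 : Irrational ((Z:ℝ) + s) := hs_irr.intCast_add Z
    have h2 := h1.div_intCast (m := 2) (by norm_num)
    simpa using h2
  have hirr : ∀ n : ℕ, n ≠ 0 → Irrational ((n:ℝ) * rA) := fun n hn => hr_irr.natCast_mul hn
  -- a n = ⌊n r⌋ + 1
  have haf : ∀ n : ℕ, n ≠ 0 → a n = ⌊(n:ℝ) * rA⌋ + 1 := by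
    intro n hn
    rw [ha n, Int.ceil_eq_iff]
    have h1 := Int.floor_le ((n:ℝ) * rA)
    have h2 := Int.lt_floor_add_one ((n:ℝ) * rA)
    have h3 : (n:ℝ) * rA ≠ (⌊(n:ℝ) * rA⌋ : ℝ) := (hirr n hn).ne_int _
    push_cast
    constructor
    · rcases lt_or_eq_of_le h1 with h | h
      · linarith
      · exact absurd h.symm h3
    · linarith
  have h1 : a 1 = Z + 1 := by
    rw [ha 1, Int.ceil_eq_iff]
    push_cast
    constructor <;> linarith
  refine ⟨h1, fun k hk => ?_⟩
  have hk0 : k ≠ 0 := by omega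
  have hk1 : k - 1 ≠ 0 := by omega
  have hkc : ((k - 1 : ℕ) : ℝ) = (k:ℝ) - 1 := by
    have : (1:ℕ) ≤ k := by omega
    push_cast [Nat.cast_sub this]
    ring
  have hkR : (2:ℝ) ≤ (k:ℝ) := by exact_mod_cast hk
  set fk : ℤ := ⌊(k:ℝ) * rA⌋ with hfk
  set fk1 : ℤ := ⌊((k:ℝ) - 1) * rA⌋ with hfk1
  have hak : a k = fk + 1 := haf k hk0
  have hak1 : a (k - 1) = fk1 + 1 := by rw [haf (k-1) hk1, hkc]
  have hfk_le : (fk:ℝ) ≤ (k:ℝ) * rA := Int.floor_le _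
  have hfk_lt : (fk:ℝ) < (k:ℝ) * rA := by
    rcases lt_or_eq_of_le hfk_le with h | h
    · exact h
    · exact absurd h.symm ((hirr k hk0).ne_int _)
  have hfk_gt : (k:ℝ) * rA < fk + 1 := Int.lt_floor_add_one _
  have hfk1_le : (fk1:ℝ) ≤ ((k:ℝ) - 1) * rA := Int.floor_le _
  have hfk1_gt : ((k:ℝ) - 1) * rA < fk1 + 1 := Int.lt_floor_add_one _
  -- bounds on the difference
  have hid : (k:ℝ) * rA = ((k:ℝ) - 1) * rA + rA := by ring
  have hlow : fk1 + Z ≤ fk := by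
    apply Int.le_floor.mpr
    push_cast
    linarith
  have hhigh : fk ≤ fk1 + Z + 1 := by
    have : (fk:ℝ) < (fk1:ℝ) + Z + 2 := by linarith
    have h2 : fk < fk1 + Z + 2 := by exact_mod_cast this
    omega
  -- the key equivalence
  have hiff : (∃ j ∈ Finset.Ico 1 k, a j = (k : ℤ)) ↔ fk1 + Z + 1 ≤ fk := by
    constructor
    · rintro ⟨j, hjmem, hja⟩
      rw [Finset.mem_Ico] at hjmem
      obtain ⟨hj1, hjk⟩ := hjmem
      have hj0 : j ≠ 0 := by omega
      have hfj : ⌊(j:ℝ) * rA⌋ = (k:ℤ) - 1 := by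
        rw [haf j hj0] at hja; omega
      have hjr_le : ((k:ℝ) - 1) ≤ (j:ℝ) * rA := by
        have := Int.floor_le ((j:ℝ) * rA)
        rw [hfj] at this
        push_cast at this
        linarith
      have hjr_lt : (j:ℝ) * rA < (k:ℝ) := by
        have := Int.lt_floor_add_one ((j:ℝ) * rA)
        rw [hfj] at this
        push_cast at this
        linarith
      have hjr_gt : ((k:ℝ) - 1) < (j:ℝ) * rA := by
        rcases lt_or_eq_of_le hjr_le with h | h
        · exact h
        · exfalso
          have := (hirr j hj0).ne_int ((k:ℤ) - 1)
          push_cast at this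
          exact this h.symm
      -- j < k(r-Z) hence j + kZ ≤ fk
      have hstep1 : (j:ℝ) < (k:ℝ) * (rA - Z) := by
        calc (j:ℝ) = (j:ℝ) * (rA * (rA - Z)) := by rw [hrr, mul_one]
          _ = (j:ℝ) * rA * (rA - Z) := by ring
          _ < (k:ℝ) * (rA - Z) := mul_lt_mul_of_pos_right hjr_lt hrmZ
      have hstep2 : ((k:ℝ) - 1) * (rA - Z) < (j:ℝ) := by
        calc ((k:ℝ) - 1) * (rA - Z) < ((j:ℝ) * rA) * (rA - Z) :=
              mul_lt_mul_of_pos_right hjr_gt hrmZ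
          _ = (j:ℝ) * (rA * (rA - Z)) := by ring
          _ = (j:ℝ) := by rw [hrr, mul_one]
      have hfk_ge : (j:ℤ) + k * Z ≤ fk := by
        apply Int.le_floor.mpr
        have hid2 : (k:ℝ) * (rA - Z) = (k:ℝ) * rA - (k:ℝ) * Z := by ring
        push_cast
        linarith
      have hgt : (fk1:ℝ) + Z < (j:ℤ) + k * Z := by
        have hid3 : ((k:ℝ) - 1) * (rA - Z) = ((k:ℝ) - 1) * rA - (k:ℝ) * Z + Z := by
          ring
        push_cast
        linarith
      have : fk1 + Z < (j:ℤ) + k * Z := by exact_mod_cast hgt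
      omega
    · intro hge
      set m : ℤ := fk - k * Z with hm
      have hmr : (fk:ℝ) = (m:ℝ) + k * Z := by push_cast [hm]; ring
      have hm1 : (m:ℝ) * rA < (k:ℝ) := by
        have hmlt : (m:ℝ) < (k:ℝ) * (rA - Z) := by
          have hid2 : (k:ℝ) * (rA - Z) = (k:ℝ) * rA - (k:ℝ) * Z := by ring
          linarith
        calc (m:ℝ) * rA < (k:ℝ) * (rA - Z) * rA := mul_lt_mul_of_pos_right hmlt hr_pos
          _ = (k:ℝ) * (rA * (rA - Z)) := by ring
          _ = (k:ℝ) := by rw [hrr, mul_one]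
      have hm2 : ((k:ℝ) - 1) < (m:ℝ) * rA := by
        have hge' : (fk1:ℝ) + Z + 1 ≤ (fk:ℝ) := by exact_mod_cast hge
        have hmgt : ((k:ℝ) - 1) * (rA - Z) < (m:ℝ) := by
          have hid3 : ((k:ℝ) - 1) * (rA - Z) = ((k:ℝ) - 1) * rA - (k:ℝ) * Z + Z := by
            ring
          linarith
        calc ((k:ℝ) - 1) = ((k:ℝ) - 1) * (rA * (rA - Z)) := by rw [hrr, mul_one]
          _ = ((k:ℝ) - 1) * (rA - Z) * rA := by ring
          _ < (m:ℝ) * rA := mul_lt_mul_of_pos_right hmgt hr_pos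
      have hm_pos : 0 < m := by
        have hp : (0:ℝ) < (m:ℝ) := by
          by_contra h
          push_neg at h
          have := mul_nonpos_iff.mpr (Or.inr ⟨h, hr_pos.le⟩)
          linarith
        exact_mod_cast hp
      have hm_lt : m < k := by
        have h1r : (1:ℝ) ≤ rA := by linarith
        have h0m : (0:ℝ) ≤ (m:ℝ) := by exact_mod_cast hm_pos.le
        have := mul_le_mul_of_nonneg_left h1r h0m
        have hmk : (m:ℝ) < (k:ℝ) := by linarith [mul_one (m:ℝ)]
        exact_mod_cast hmk
      refine ⟨m.toNat, ?_, ?_⟩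
      · rw [Finset.mem_Ico]; omega
      · have hcast : ((m.toNat : ℕ) : ℝ) = (m:ℝ) := by
          rw [← Int.cast_natCast, Int.toNat_of_nonneg hm_pos.le]
        rw [ha m.toNat, hcast, Int.ceil_eq_iff]
        push_cast
        exact ⟨hm2, hm1.le⟩
  constructor
  · intro hE
    have := hiff.mp hE
    omega
  · intro hnE
    have := mt hiff.mpr hnE
    omega
end

section
/- Let Z ≥ 2 be an integer, r_B = (Z+1 + √(Z²+2Z−3))/2, and a(n) = ⌈n·r_B⌉. Then a(1) = Z+1, and for every k > 1: a(k) − a(k−1) = Z if k ∈ {a(1),...,a(k−1)}, and a(k) − a(k−1) = Z+1 otherwise. That is, a(n) = ⌈n·r_B⌉ satisfies the self-referential definition of S(Z+1, Z, Z+1). -/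
/-- a(n) = ⌈n·r_B⌉ with r_B = (Z+1+√(Z²+2Z−3))/2 satisfies the
self-referential definition of S(Z+1, Z, Z+1). -/
theorem stmt_4 (Z : ℤ) (hZ : 2 ≤ Z) (rB : ℝ)
    (hrB : rB = ((Z : ℝ) + 1 + Real.sqrt ((Z : ℝ) ^ 2 + 2 * (Z : ℝ) - 3)) / 2)
    (a : ℕ → ℤ) (ha : ∀ n : ℕ, a n = ⌈(n : ℝ) * rB⌉) :
    a 1 = Z + 1 ∧
      ∀ k : ℕ, 2 ≤ k →
        ((∃ j ∈ Finset.Ico 1 k, a j = (k : ℤ)) → a k - a (k - 1) = Z) ∧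
        ((¬ ∃ j ∈ Finset.Ico 1 k, a j = (k : ℤ)) → a k - a (k - 1) = Z + 1) := by
  have hZR : (2:ℝ) ≤ (Z:ℝ) := by exact_mod_cast hZ
  set s := Real.sqrt ((Z : ℝ) ^ 2 + 2 * (Z : ℝ) - 3) with hs
  have hsnn : 0 ≤ s := Real.sqrt_nonneg _
  have hs2 : s ^ 2 = (Z:ℝ)^2 + 2*(Z:ℝ) - 3 := Real.sq_sqrt (by nlinarith)
  have hslb : (Z:ℝ) - 1 < s := by nlinarith
  have hsub : s < (Z:ℝ) + 1 := by nlinarith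
  have hrlb : (Z:ℝ) < rB := by rw [hrB]; linarith
  have hrub : rB < (Z:ℝ) + 1 := by rw [hrB]; linarith
  have hr1 : (1:ℝ) < rB := by linarith
  have hr0 : (0:ℝ) < rB := by linarith
  have hkey : rB * ((Z:ℝ) + 1 - rB) = 1 := by rw [hrB]; nlinarith
  -- irrationality of s
  have hsirr : Irrational s := by
    apply irrational_nrt_of_notint_nrt 2 (Z^2 + 2*Z - 3)
      (by rw [hs2]; push_cast; ring) _ two_pos
    rintro ⟨y, hy⟩
    rw [hy] at hslb hsub hs2
    have h1 : Z - 1 < y := by exact_mod_cast hslb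
    have h2 : y < Z + 1 := by exact_mod_cast hsub
    have hy2 : y ^ 2 = Z ^ 2 + 2 * Z - 3 := by exact_mod_cast hs2
    have hyZ : y = Z := by omega
    rw [hyZ] at hy2
    have h3 : 2 * Z - 3 = 0 := by linarith
    omega
  have hrirr : Irrational rB := by
    rintro ⟨q, hq⟩
    apply hsirr
    refine ⟨2 * q - (Z + 1), ?_⟩
    rw [hrB] at hq
    push_cast
    linarith
  have hirrmul : ∀ n : ℤ, n ≠ 0 → ∀ z : ℤ, (n:ℝ) * rB ≠ (z:ℝ) := by
    intro n hn z
    exact (hrirr.intCast_mul hn).ne_int z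
  -- a 1 = Z + 1
  have ha1 : a 1 = Z + 1 := by
    rw [ha 1]
    have h1 : ⌈(1:ℕ) * rB⌉ ≤ Z + 1 := Int.ceil_le.mpr (by push_cast; linarith)
    have h2 : Z < ⌈(1:ℕ) * rB⌉ := Int.lt_ceil.mpr (by push_cast; linarith)
    omega
  refine ⟨ha1, ?_⟩
  intro k hk
  -- basic facts about a k
  have hm_ub : (k:ℝ) * rB ≤ (a k : ℝ) := by
    rw [ha k]; exact_mod_cast Int.le_ceil _
  have hm_lt : (k:ℝ) * rB < (a k : ℝ) := by
    refine lt_of_le_of_ne hm_ub ?_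
    have := hirrmul (k:ℤ) (by positivity) (a k)
    intro h; apply this; push_cast; push_cast at h; linarith
  have hm_lb : (a k : ℝ) < (k:ℝ) * rB + 1 := by
    rw [ha k]; exact_mod_cast Int.ceil_lt_add_one _
  have hk1cast : ((k - 1 : ℕ) : ℝ) = (k:ℝ) - 1 := by
    have : (1:ℕ) ≤ k := by omega
    push_cast [Nat.cast_sub this]; ring
  have hak1 : a (k-1) = ⌈((k:ℝ) - 1) * rB⌉ := by rw [ha (k-1), hk1cast]
  -- j0
  set j0 : ℤ := (k:ℤ) * (Z + 1) - a k with hj0def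
  have hj0r : (j0:ℝ) * rB = (k:ℝ) - rB * ((a k : ℝ) - (k:ℝ) * rB) := by
    rw [hj0def]
    push_cast
    linear_combination (k:ℝ) * hkey
  have hj0ub : (j0:ℝ) * rB < (k:ℝ) := by
    have h1 : 0 < rB * ((a k : ℝ) - (k:ℝ) * rB) := mul_pos hr0 (by linarith)
    rw [hj0r]; linarith
  have hj0ub1 : (k:ℝ) < ((j0:ℝ) + 1) * rB := by
    have hexp : ((j0:ℝ) + 1) * rB = (j0:ℝ) * rB + rB := by ring
    have h1 : rB * ((a k : ℝ) - (k:ℝ) * rB) < rB * 1 :=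
      mul_lt_mul_of_pos_left (by linarith) hr0
    rw [hexp, hj0r]; linarith
  constructor
  · -- existence case
    rintro ⟨j, hjmem, hja⟩
    simp only [Finset.mem_Ico] at hjmem
    rw [ha j] at hja
    have hjub' : (j:ℝ) * rB ≤ (k:ℝ) := by
      have h := Int.le_ceil ((j:ℝ) * rB)
      rw [hja] at h; exact_mod_cast h
    have hjub : (j:ℝ) * rB < (k:ℝ) := by
      refine lt_of_le_of_ne hjub' ?_
      have hjne : (j:ℤ) ≠ 0 := by omega
      have := hirrmul (j:ℤ) hjne (k:ℤ)
      intro h; apply this; push_cast; push_cast at h; linarith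
    have hjlb : (k:ℝ) - 1 < (j:ℝ) * rB := by
      have h := Int.ceil_lt_add_one ((j:ℝ) * rB)
      rw [hja] at h
      have : ((k:ℤ):ℝ) < (j:ℝ) * rB + 1 := by exact_mod_cast h
      push_cast at this ⊢; linarith
    -- j = j0
    have hjj0 : (j:ℤ) = j0 := by
      have h1 : (j:ℤ) < j0 + 1 := by
        by_contra h
        push_neg at h
        have : ((j0:ℝ) + 1) * rB ≤ (j:ℝ) * rB := by
          apply mul_le_mul_of_nonneg_right _ (le_of_lt hr0)
          have : (j0 + 1 : ℤ) ≤ (j:ℤ) := h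
          exact_mod_cast this
        linarith
      have h2 : j0 - 1 < (j:ℤ) := by
        by_contra h
        push_neg at h
        have : (j:ℝ) * rB ≤ ((j0:ℝ) - 1) * rB := by
          apply mul_le_mul_of_nonneg_right _ (le_of_lt hr0)
          have : (j:ℤ) ≤ (j0 - 1 : ℤ) := h
          exact_mod_cast this
        have hexp : ((j0:ℝ) - 1) * rB = (j0:ℝ) * rB - rB := by ring
        have : (j:ℝ) * rB ≤ (j0:ℝ) * rB - rB := by rw [← hexp]; exact this
        linarith
      omega
    have hcond : rB * ((a k : ℝ) - (k:ℝ) * rB) < 1 := by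
      have : (k:ℝ) - 1 < (j0:ℝ) * rB := by rw [← hjj0]; push_cast; exact hjlb
      rw [hj0r] at this; linarith
    have hcond2 : (a k : ℝ) - (k:ℝ) * rB < (Z:ℝ) + 1 - rB := by
      have h' : rB * ((a k : ℝ) - (k:ℝ) * rB) < rB * ((Z:ℝ) + 1 - rB) := by
        rw [hkey]; exact hcond
      exact lt_of_mul_lt_mul_left h' hr0.le
    -- a (k-1) = a k - Z
    have hle : a (k-1) ≤ a k - Z := by
      rw [hak1]
      apply Int.ceil_le.mpr
      have hexp : ((k:ℝ) - 1) * rB = (k:ℝ) * rB - rB := by ring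
      push_cast
      rw [hexp]; linarith
    have hge : a k - Z - 1 < a (k-1) := by
      rw [hak1]
      apply Int.lt_ceil.mpr
      have hexp : ((k:ℝ) - 1) * rB = (k:ℝ) * rB - rB := by ring
      push_cast
      rw [hexp]; linarith
    omega
  · -- non-existence case
    intro hne
    have hne1 : rB * ((a k : ℝ) - (k:ℝ) * rB) ≠ 1 := by
      intro h
      set c : ℤ := a k - (k:ℤ) * (Z + 1) with hc
      have hcr : (c:ℝ) * rB = 1 - (k:ℝ) := by
        rw [hc]
        push_cast
        linear_combination h - (k:ℝ) * hkey
      rcases eq_or_ne c 0 with hc0 | hc0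
      · rw [hc0] at hcr
        simp at hcr
        have : (k:ℝ) = 1 := by linarith
        have : k = 1 := by exact_mod_cast this
        omega
      · exact hirrmul c hc0 (1 - (k:ℤ)) (by push_cast at hcr ⊢; linarith)
    have hgt : 1 < rB * ((a k : ℝ) - (k:ℝ) * rB) := by
      rcases lt_trichotomy (rB * ((a k : ℝ) - (k:ℝ) * rB)) 1 with hlt | heq | hgt
      · exfalso
        apply hne
        have hj0lb : (k:ℝ) - 1 < (j0:ℝ) * rB := by rw [hj0r]; linarith
        have hkR : (2:ℝ) ≤ (k:ℝ) := by exact_mod_cast hk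
        have hj0pos : 0 < j0 := by
          by_contra h
          push_neg at h
          have h0 : (j0:ℝ) ≤ 0 := by exact_mod_cast h
          have h1 : (j0:ℝ) * rB ≤ 0 * rB := mul_le_mul_of_nonneg_right h0 hr0.le
          rw [zero_mul] at h1
          linarith
        have hj0ltk : j0 < (k:ℤ) := by
          by_contra h
          push_neg at h
          have h' : (k:ℝ) ≤ (j0:ℝ) := by exact_mod_cast h
          have h1 : (k:ℝ) * rB ≤ (j0:ℝ) * rB := mul_le_mul_of_nonneg_right h' hr0.le
          have h2 : (k:ℝ) * 1 < (k:ℝ) * rB := by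
            apply mul_lt_mul_of_pos_left hr1 (by linarith)
          rw [mul_one] at h2
          linarith
        refine ⟨j0.toNat, ?_, ?_⟩
        · simp only [Finset.mem_Ico]
          omega
        · rw [ha]
          have hcast : ((j0.toNat : ℕ) : ℝ) = (j0:ℝ) := by
            exact_mod_cast Int.toNat_of_nonneg hj0pos.le
          rw [hcast]
          have h1 : ⌈(j0:ℝ) * rB⌉ ≤ (k:ℤ) := Int.ceil_le.mpr (by push_cast; linarith)
          have h2 : (k:ℤ) - 1 < ⌈(j0:ℝ) * rB⌉ := Int.lt_ceil.mpr (by push_cast; linarith)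
          omega
      · exact absurd heq hne1
      · exact hgt
    have hcond2 : (Z:ℝ) + 1 - rB < (a k : ℝ) - (k:ℝ) * rB := by
      have h' : rB * ((Z:ℝ) + 1 - rB) < rB * ((a k : ℝ) - (k:ℝ) * rB) := by
        rw [hkey]; exact hgt
      exact lt_of_mul_lt_mul_left h' hr0.le
    have hle : a (k-1) ≤ a k - Z - 1 := by
      rw [hak1]
      apply Int.ceil_le.mpr
      have hexp : ((k:ℝ) - 1) * rB = (k:ℝ) * rB - rB := by ring
      push_cast
      rw [hexp]; linarith
    have hge : a k - Z - 2 < a (k-1) := by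
      rw [hak1]
      apply Int.lt_ceil.mpr
      have hexp : ((k:ℝ) - 1) * rB = (k:ℝ) * rB - rB := by ring
      push_cast
      rw [hexp]; linarith
    omega
end

section
/- For the sequence S(x,0,z) with z ≥ 2, there exists K such that for all k ≥ K: k ∈ {a(1),...,a(k-1)} if and only if k ≡ x (mod z). -/
open scoped Classical

/-- for S(x,0,z) with z ≥ 2, eventually a hit at k occurs
iff k ≡ x (mod z). -/
theorem stmt_6 (x z : ℕ) (hz : 2 ≤ z) (a : ℕ → ℕ)
    (h1 : a 1 = x)
    (hrec : ∀ k, 2 ≤ k →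
      a k = a (k - 1) + if ∃ j ∈ Finset.Ico 1 k, a j = k then 0 else z) :
    ∃ K : ℕ, ∀ k, K ≤ k →
      ((∃ j ∈ Finset.Ico 1 k, a j = k) ↔ k ≡ x [MOD z]) := by
  -- each step adds 0 or z
  have hstep : ∀ m, 1 ≤ m → a (m+1) = a m ∨ a (m+1) = a m + z := by
    intro m hm
    have h := hrec (m+1) (by omega)
    simp only [Nat.add_sub_cancel] at h
    split at h
    · left; omega
    · right; omega
  -- monotone
  have mono : ∀ j k, 1 ≤ j → j ≤ k → a j ≤ a k := by
    intro j k hj hjk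
    induction hjk with
    | refl => exact le_rfl
    | @step n hn ih =>
      show a j ≤ a (n+1)
      have h2 := hstep n (le_trans hj hn)
      rcases h2 with h2 | h2 <;> omega
  -- all values ≡ x mod z
  have residue : ∀ k, 1 ≤ k → a k % z = x % z := by
    intro k hk
    induction k with
    | zero => omega
    | succ n ih =>
      rcases Nat.lt_or_ge n 1 with h | h
      · have : n = 0 := by omega
        subst this; rw [show (0:ℕ)+1 = 1 from rfl, h1]
      · have hres := ih h
        rcases hstep n h with h2 | h2
        · rw [h2]; exact hres
        · rw [h2, Nat.add_mod_right]; exact hres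
  -- a m ≥ m for m ≥ 2
  have hM : ∀ m, 2 ≤ m → m ≤ a m := by
    intro m hm
    induction m with
    | zero => omega
    | succ n ih =>
      rcases Nat.lt_or_ge n 2 with h | h
      · have hn : n = 1 := by omega
        subst hn
        show 2 ≤ a 2
        have h := hrec 2 (by omega)
        rw [show (2:ℕ)-1 = 1 from rfl] at h
        by_cases hhit : ∃ j ∈ Finset.Ico 1 2, a j = 2
        · obtain ⟨j, hj, hja⟩ := hhit
          simp only [Finset.mem_Ico] at hj
          have : j = 1 := by omega
          subst this
          omega
        · rw [if_neg hhit] at h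
          omega
      · have ihn := ih h
        rcases Nat.lt_or_ge n (a n) with h2 | h2
        · rcases hstep n (by omega) with h3 | h3 <;> omega
        · -- a n = n, so n+1 is a miss
          have hmiss : ¬ ∃ j ∈ Finset.Ico 1 (n+1), a j = n+1 := by
            rintro ⟨j, hj, hja⟩
            simp only [Finset.mem_Ico] at hj
            have := mono j n hj.1 (by omega)
            omega
          have h4 := hrec (n+1) (by omega)
          simp only [Nat.add_sub_cancel] at h4
          rw [if_neg hmiss] at h4
          omega
  -- intermediate value: any value v ≡ x mod z with x ≤ v ≤ a j is attained by some i ≤ j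
  have hD : ∀ j v, 1 ≤ j → x ≤ v → v % z = x % z → v ≤ a j →
      ∃ i, 1 ≤ i ∧ i ≤ j ∧ a i = v := by
    intro j
    induction j with
    | zero => intro v h; exact absurd h (by omega)
    | succ n ih =>
      intro v hj hxv hv hva
      rcases Nat.lt_or_ge n 1 with h | h
      · have : n = 0 := by omega
        subst this
        have hva' : v ≤ a 1 := hva
        exact ⟨1, le_rfl, le_rfl, by omega⟩
      · rcases le_or_gt v (a n) with h2 | h2
        · obtain ⟨i, hi1, hi2, hi3⟩ := ih v h hxv hv h2
          exact ⟨i, hi1, by omega, hi3⟩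
        · rcases hstep n h with h3 | h3
          · omega
          · -- a n < v ≤ a n + z and v ≡ a n [MOD z] ⇒ v = a n + z
            have hres := residue n h
            have hmod : a n ≡ v [MOD z] := by
              show a n % z = v % z
              rw [hres, hv]
            have hdvd : z ∣ v - a n := (Nat.modEq_iff_dvd' (le_of_lt h2)).mp hmod
            have hle : z ≤ v - a n := Nat.le_of_dvd (by omega) hdvd
            exact ⟨n+1, by omega, le_rfl, by omega⟩
  refine ⟨x + z + 3, fun k hk => ?_⟩
  constructor
  · rintro ⟨j, hj, hja⟩
    simp only [Finset.mem_Ico] at hj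
    show k % z = x % z
    rw [← hja]
    exact residue j hj.1
  · intro hres
    have hres' : k % z = x % z := hres
    -- a (k-1) ≥ k-1, and a(k-1) ≠ k-1 since residues differ
    have hM1 : k - 1 ≤ a (k - 1) := hM (k-1) (by omega)
    have hne : a (k - 1) ≠ k - 1 := by
      intro heq
      have h2 : (k - 1) % z = x % z := heq ▸ residue (k-1) (by omega)
      have hmod : k - 1 ≡ k [MOD z] := by
        show (k-1) % z = k % z
        rw [h2, hres']
      have hdvd : z ∣ k - (k - 1) := (Nat.modEq_iff_dvd' (by omega)).mp hmod
      have heq1 : k - (k - 1) = 1 := by omega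
      rw [heq1] at hdvd
      have := Nat.le_of_dvd (by omega) hdvd
      omega
    have hge : k ≤ a (k - 1) := by omega
    obtain ⟨i, hi1, hi2, hi3⟩ := hD (k-1) k (by omega) (by omega) hres' hge
    exact ⟨i, Finset.mem_Ico.mpr ⟨hi1, by omega⟩, hi3⟩
end

section
/- For the sequence S(x,0,z) with z ≥ 2, there exists K such that for all k ≥ K, the linear recurrence a(k) − a(k−1) − a(k−z) + a(k−z−1) = 0 holds. -/
open scoped Classical

/-- for S(x,0,z) with z ≥ 2, the linear recurrence
a(k) - a(k-1) - a(k-z) + a(k-z-1) = 0 eventually holds. -/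
theorem stmt_7 (x z : ℕ) (hz : 2 ≤ z) (a : ℕ → ℕ)
    (h1 : a 1 = x)
    (hrec : ∀ k, 2 ≤ k →
      a k = a (k - 1) + if ∃ j ∈ Finset.Ico 1 k, a j = k then 0 else z) :
    ∃ K : ℕ, ∀ k, K ≤ k →
      (a k : ℤ) - (a (k - 1) : ℤ) - (a (k - z) : ℤ) + (a (k - z - 1) : ℤ) = 0 := by
  -- each step adds 0 or z
  have hstep : ∀ k, 2 ≤ k → a k = a (k - 1) ∨ a k = a (k - 1) + z := by
    intro k hk
    rw [hrec k hk]
    split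
    · left; simp
    · right; rfl
  -- monotonicity from index 1 on
  have hmono : ∀ i j, 1 ≤ i → i ≤ j → a i ≤ a j := by
    intro i j hi hij
    induction j with
    | zero => omega
    | succ n ih =>
      rcases Nat.lt_or_ge i (n + 1) with h | h
      · have h2 : i ≤ n := by omega
        have h3 := ih h2
        have h4 := hstep (n + 1) (by omega)
        simp only [Nat.add_sub_cancel] at h4
        omega
      · have h5 : i = n + 1 := by omega
        rw [h5]
  -- values are ≡ x mod z
  have hmod : ∀ m, 1 ≤ m → a m % z = x % z := by
    intro m hm
    induction m with
    | zero => omega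
    | succ n ih =>
      rcases Nat.eq_or_lt_of_le hm with h | h
      · have : n = 0 := by omega
        subst this
        rw [h1]
      · have hn : 1 ≤ n := by omega
        have hihn := ih hn
        have h4 := hstep (n + 1) (by omega)
        simp only [Nat.add_sub_cancel] at h4
        rcases h4 with h' | h'
        · rw [h']; exact hihn
        · rw [h', Nat.add_mod_right]; exact hihn
  -- a m ≥ m for m ≥ 2
  have hge : ∀ m, 2 ≤ m → m ≤ a m := by
    intro m
    induction m using Nat.strong_induction_on with
    | _ m ih =>
      intro hm
      by_cases hPm : ∃ j ∈ Finset.Ico 1 m, a j = m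
      · obtain ⟨j, hj, hja⟩ := hPm
        rw [Finset.mem_Ico] at hj
        have h5 : a j ≤ a (m - 1) := hmono j (m - 1) hj.1 (by omega)
        have h6 := hstep m hm
        omega
      · have e : a m = a (m - 1) + z := by rw [hrec m hm, if_neg hPm]
        rcases Nat.lt_or_ge m 3 with h3 | h3
        · have hm2 : m = 2 := by omega
          subst hm2
          simp only [show (2 : ℕ) - 1 = 1 from rfl] at e
          omega
        · have := ih (m - 1) (by omega) (by omega)
          omega
  -- characterization of the stall condition for large k
  have hchar : ∀ k, x + z + 3 ≤ k →
      ((∃ j ∈ Finset.Ico 1 k, a j = k) ↔ k % z = x % z) := by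
    intro k hk
    constructor
    · rintro ⟨j, hj, hja⟩
      rw [Finset.mem_Ico] at hj
      rw [← hja]
      exact hmod j hj.1
    · intro hkmod
      have hE : ∃ m, 2 ≤ m ∧ k ≤ a m := by
        refine ⟨max 2 k, le_max_left _ _, ?_⟩
        exact le_trans (le_max_right 2 k) (hge (max 2 k) (le_max_left _ _))
      obtain ⟨hj02, hj0k⟩ := Nat.find_spec hE
      set j0 := Nat.find hE with hj0def
      have hprev : a (j0 - 1) < k := by
        rcases Nat.lt_or_ge j0 3 with h | h
        · have h2 : j0 = 2 := by omega
          have : a (j0 - 1) = x := by rw [h2]; exact h1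
          omega
        · have := Nat.find_min hE (show j0 - 1 < j0 by omega)
          omega
      have hstep0 := hstep j0 hj02
      have hj0v : a j0 = k := by
        have hub : a j0 < k + z := by omega
        have hm1 : k % z = a j0 % z := by rw [hmod j0 (by omega), hkmod]
        have hd : z ∣ a j0 - k := (Nat.modEq_iff_dvd' hj0k).mp hm1
        have := Nat.eq_zero_of_dvd_of_lt hd
        omega
      have hj0lt : j0 < k := by
        rcases Nat.lt_or_ge j0 3 with h | h
        · omega
        · have := hge (j0 - 1) (by omega)
          omega
      exact ⟨j0, Finset.mem_Ico.mpr ⟨by omega, hj0lt⟩, hj0v⟩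
  -- conclusion
  refine ⟨x + 2 * z + 4, fun k hk => ?_⟩
  have hk1 : x + z + 3 ≤ k := by omega
  have hk2 : x + z + 3 ≤ k - z := by omega
  have hmodeq : (k - z) % z = k % z := by
    conv_rhs => rw [show k = (k - z) + z by omega]
    rw [Nat.add_mod_right]
  have hiff : (∃ j ∈ Finset.Ico 1 k, a j = k) ↔
      (∃ j ∈ Finset.Ico 1 (k - z), a j = k - z) := by
    rw [hchar k hk1, hchar (k - z) hk2, hmodeq]
  have e1 := hrec k (by omega)
  have e2 := hrec (k - z) (by omega)
  by_cases hPk : ∃ j ∈ Finset.Ico 1 k, a j = k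
  · rw [if_pos hPk] at e1
    rw [if_pos (hiff.mp hPk)] at e2
    omega
  · rw [if_neg hPk] at e1
    rw [if_neg (fun h => hPk (hiff.mpr h))] at e2
    omega
end

section
/- For the sequence S(x,0,z) with z ≥ 2, the limit of a(k)/k as k → ∞ exists and equals z − 1. -/
open scoped Classical

open Filter

/-- for S(x,0,z) with z ≥ 2, a(k)/k → z - 1. -/
theorem stmt_8 (x z : ℕ) (hz : 2 ≤ z) (a : ℕ → ℕ)
    (h1 : a 1 = x)
    (hrec : ∀ k, 2 ≤ k →
      a k = a (k - 1) + if ∃ j ∈ Finset.Ico 1 k, a j = k then 0 else z) :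
    Tendsto (fun k : ℕ => (a k : ℝ) / k) atTop (nhds ((z : ℝ) - 1)) := by
  have hrec' : ∀ k, 1 ≤ k →
      a (k+1) = a k + if ∃ j ∈ Finset.Ico 1 (k+1), a j = k+1 then 0 else z := by
    intro k hk
    have := hrec (k+1) (by omega)
    simpa using this
  -- all values are of the form x + z*m
  have hmod : ∀ k, 1 ≤ k → ∃ m, a k = x + z * m := by
    intro k
    induction k with
    | zero => omega
    | succ n ih =>
      intro _
      rcases Nat.eq_zero_or_pos n with hn | hn
      · subst hn; exact ⟨0, by simp [h1]⟩
      · rcases ih hn with ⟨m, hm⟩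
        rw [hrec' n hn]
        split
        · exact ⟨m, by omega⟩
        · exact ⟨m + 1, by rw [hm]; ring⟩
  -- one-step bounds
  have hstep_le : ∀ k, 1 ≤ k → a k ≤ a (k+1) := by
    intro k hk; rw [hrec' k hk]; omega
  have hstep_ub : ∀ k, 1 ≤ k → a (k+1) ≤ a k + z := by
    intro k hk; rw [hrec' k hk]; split <;> omega
  -- monotonicity
  have hmono : ∀ j k, 1 ≤ j → j ≤ k → a j ≤ a k := by
    intro j k hj hjk
    induction k, hjk using Nat.le_induction with
    | base => exact le_rfl
    | succ n hn ih => exact le_trans ih (hstep_le n (by omega))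
  -- a k ≥ k for k ≥ 2
  have hge : ∀ k, 2 ≤ k → k ≤ a k := by
    intro k hk
    induction k, hk using Nat.le_induction with
    | base =>
      have := hrec' 1 (by norm_num)
      rw [this]
      split
      · rename_i h
        obtain ⟨j, hj, hja⟩ := h
        simp only [Finset.mem_Ico] at hj
        have : j = 1 := by omega
        subst this
        omega
      · omega
    | succ n hn ih =>
      rw [hrec' n (by omega)]
      split
      · rename_i h
        obtain ⟨j, hj, hja⟩ := h
        simp only [Finset.mem_Ico] at hj
        have : a j ≤ a n := hmono j n (by omega) (by omega)
        omega
      · omega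
  -- attainment of intermediate values
  have hattain : ∀ k, 1 ≤ k → ∀ m, x + z * m ≤ a k →
      ∃ j, 1 ≤ j ∧ j ≤ k ∧ a j = x + z * m := by
    intro k hk
    induction k, hk using Nat.le_induction with
    | base =>
      intro m hm
      rw [h1] at hm
      have hm0 : m = 0 := by
        rcases Nat.eq_zero_or_pos m with h | h
        · exact h
        · have : z * 1 ≤ z * m := Nat.mul_le_mul le_rfl h
          omega
      subst hm0
      exact ⟨1, le_rfl, le_rfl, by simp [h1]⟩
    | succ n hn ih =>
      intro m hm
      by_cases hle : x + z * m ≤ a n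
      · obtain ⟨j, h1j, h2j, h3j⟩ := ih m hle
        exact ⟨j, h1j, by omega, h3j⟩
      · push_neg at hle
        have hr := hrec' n hn
        have hnohit : ¬ (∃ j ∈ Finset.Ico 1 (n+1), a j = n+1) := by
          intro h
          rw [if_pos h, add_zero] at hr
          rw [hr] at hm
          omega
        rw [if_neg hnohit] at hr
        rw [hr] at hm
        obtain ⟨m', hm'⟩ := hmod n hn
        rw [hm'] at hle hm
        have h1m : m' < m := by
          have := Nat.lt_of_mul_lt_mul_left (a := z) (by omega : z * m' < z * m)
          exact this
        have h2m : m ≤ m' + 1 := by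
          by_contra h
          push_neg at h
          have : z * (m' + 2) ≤ z * m := Nat.mul_le_mul le_rfl (by omega)
          have he : z * (m' + 2) = z * m' + z + z := by ring
          omega
        have hmm : m = m' + 1 := by omega
        refine ⟨n + 1, by omega, le_rfl, ?_⟩
        rw [hr, hm', hmm]
        ring
  -- hit characterization for k ≥ 3
  have hhit : ∀ k, 3 ≤ k →
      ((∃ j ∈ Finset.Ico 1 k, a j = k) ↔ ∃ m, k = x + z * m) := by
    intro k hk
    constructor
    · rintro ⟨j, hj, hja⟩
      simp only [Finset.mem_Ico] at hj
      obtain ⟨m, hm⟩ := hmod j hj.1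
      exact ⟨m, by omega⟩
    · rintro ⟨m, hm⟩
      obtain ⟨m', hm'⟩ := hmod (k-1) (by omega)
      have hge1 : k - 1 ≤ a (k-1) := hge (k-1) (by omega)
      -- a (k-1) ≠ k-1
      have hne : a (k-1) ≠ k - 1 := by
        intro h
        rw [hm'] at h
        -- x + z*m' = k-1 and k = x + z*m : z*m = z*m'+1
        have h1m : z * m' < z * m := by omega
        have h2m : m' < m := Nat.lt_of_mul_lt_mul_left h1m
        have : z * (m' + 1) ≤ z * m := Nat.mul_le_mul le_rfl (by omega)
        have he : z * (m' + 1) = z * m' + z := by ring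
        omega
      have hka : k ≤ a (k - 1) := by omega
      obtain ⟨j, h1j, h2j, h3j⟩ := hattain (k-1) (by omega) m (by omega)
      exact ⟨j, by simp only [Finset.mem_Ico]; omega, by omega⟩
  -- the period-key lemma: for k ≥ 3 with x ≤ k, a (k+z) + z = a k + z*z
  have hper : ∀ k, 3 ≤ k → x ≤ k → a (k + z) + z = a k + z * z := by
    intro k hk3 hkx
    set d := (k - x) % z with hd_def
    set q := (k - x) / z with hq_def
    have hdlt : d < z := Nat.mod_lt _ (by omega)
    have hqd : z * q + d = k - x := Nat.div_add_mod (k - x) z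
    have hkx' : k = x + z * q + d := by omega
    set i0 := z - 1 - d with hi0_def
    have claim : ∀ n, n ≤ z →
        a (k + n) + (if i0 < n then z else 0) = a k + z * n := by
      intro n hn
      induction n with
      | zero => simp
      | succ n ih =>
        have hnz : n < z := by omega
        have ihn := ih (by omega)
        have hiff : (∃ j ∈ Finset.Ico 1 (k + n + 1), a j = k + n + 1) ↔ n = i0 := by
          rw [hhit (k + n + 1) (by omega)]
          constructor
          · rintro ⟨m, hm⟩
            have h2 : z * q + d + n + 1 = z * m := by omega
            have hmq : q < m := by
              by_contra h
              push_neg at h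
              have : z * m ≤ z * q := Nat.mul_le_mul le_rfl h
              omega
            have hm2 : m ≤ q + 1 := by
              by_contra h
              push_neg at h
              have h4 : z * (q + 2) ≤ z * m := Nat.mul_le_mul le_rfl (by omega)
              have h3 : z * (q + 2) = z * q + z + z := by ring
              omega
            have hmeq : m = q + 1 := by omega
            subst hmeq
            have h3 : z * (q + 1) = z * q + z := by ring
            omega
          · intro hn0
            refine ⟨q + 1, ?_⟩
            have h3 : z * (q + 1) = z * q + z := by ring
            omega
        have hr := hrec' (k + n) (by omega)
        have hkn : k + (n + 1) = k + n + 1 := by omega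
        rw [hkn, hr]
        have hmulsucc : z * (n + 1) = z * n + z := by ring
        by_cases hcase : n = i0
        · rw [if_pos (hiff.mpr hcase)]
          have hlt1 : i0 < n + 1 := by omega
          have hlt2 : ¬ i0 < n := by omega
          rw [if_pos hlt1]
          rw [if_neg hlt2] at ihn
          omega
        · rw [if_neg (fun h => hcase (hiff.mp h))]
          by_cases hlt : i0 < n
          · rw [if_pos (by omega : i0 < n + 1)]
            rw [if_pos hlt] at ihn
            omega
          · rw [if_neg (by omega : ¬ i0 < n + 1)]
            rw [if_neg hlt] at ihn
            omega
    have := claim z le_rfl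
    rw [if_pos (by omega : i0 < z)] at this
    have hzz : z * z = z * z := rfl
    omega
  -- iterate the period lemma from K := max 3 x
  set K := max 3 x with hK_def
  have hK3 : 3 ≤ K := le_max_left _ _
  have hKx : x ≤ K := le_max_right _ _
  have hiter : ∀ q, a (K + z * q) + z * q = a K + z * z * q := by
    intro q
    induction q with
    | zero => simp
    | succ q ih =>
      have he1 : z * (q + 1) = z * q + z := by ring
      have he2 : z * z * (q + 1) = z * z * q + z * z := by ring
      have hstep := hper (K + z * q) (by omega) (by omega)
      have hrw : K + z * (q + 1) = K + z * q + z := by omega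
      rw [hrw, he2]
      omega
  -- growth bound over r steps
  have haux : ∀ j r, 1 ≤ j → a (j + r) ≤ a j + z * r := by
    intro j r hj
    induction r with
    | zero => simp
    | succ r ih =>
      have := hstep_ub (j + r) (by omega)
      have he : z * (r + 1) = z * r + z := by ring
      have hr : j + (r + 1) = (j + r) + 1 := by omega
      rw [hr, he]
      omega
  -- the uniform bound: |a k - (z-1) k| ≤ C for k ≥ K
  set C := a K + z * K + z * z with hC_def
  have hbound : ∀ k, K ≤ k → (z - 1) * k ≤ a k + C ∧ a k ≤ (z - 1) * k + C := by
    intro k hk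
    set q := (k - K) / z with hq_def
    set r := (k - K) % z with hr_def
    have hrlt : r < z := Nat.mod_lt _ (by omega)
    have hqr : z * q + r = k - K := Nat.div_add_mod (k - K) z
    have hkeq : k = K + z * q + r := by omega
    have hA : a K + z * z * q ≤ a k + z * q := by
      have h1 := hiter q
      have h2 : a (K + z * q) ≤ a k := hmono (K + z * q) k (by omega) (by omega)
      omega
    have hB : a k ≤ a (K + z * q) + z * r := by
      have := haux (K + z * q) r (by omega)
      rw [← hkeq] at this
      exact this
    have hzk : (z - 1) * k + k = z * k := by
      have h1 : k ≤ z * k := Nat.le_mul_of_pos_left k (by omega)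
      have h2 : (z - 1) * k = z * k - k := by rw [Nat.sub_one_mul]
      omega
    have he : z * k = z * K + z * z * q + z * r := by rw [hkeq]; ring
    have hzr : z * r ≤ z * z := Nat.mul_le_mul le_rfl (by omega)
    have hKzK : K ≤ z * K := Nat.le_mul_of_pos_left K (by omega)
    have hzzz : z ≤ z * z := Nat.le_mul_of_pos_left z (by omega)
    have hiq := hiter q
    constructor
    · omega
    · omega
  -- now the limit
  have hcast : ((z - 1 : ℕ) : ℝ) = (z : ℝ) - 1 := by
    have : 1 ≤ z := by omega
    push_cast [Nat.cast_sub this]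
    ring
  have hsq : Tendsto (fun k : ℕ => (a k : ℝ) / k - ((z : ℝ) - 1)) atTop (nhds 0) := by
    apply squeeze_zero_norm' (a := fun k : ℕ => (C : ℝ) / k)
    · filter_upwards [eventually_ge_atTop (K + 1)] with k hk
      have hk1 : 1 ≤ k := by omega
      have hkpos : (0 : ℝ) < (k : ℝ) := by exact_mod_cast Nat.pos_of_ne_zero (by omega)
      obtain ⟨hb1, hb2⟩ := hbound k (by omega)
      have hb1' : ((z : ℝ) - 1) * k ≤ (a k : ℝ) + C := by
        have := (Nat.cast_le (α := ℝ)).mpr hb1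
        push_cast at this
        rw [hcast] at this  -- maybe not needed
        linarith [this]
      have hb2' : (a k : ℝ) ≤ ((z : ℝ) - 1) * k + C := by
        have := (Nat.cast_le (α := ℝ)).mpr hb2
        push_cast at this
        rw [hcast] at this
        linarith [this]
      have heq : (a k : ℝ) / k - ((z : ℝ) - 1) = ((a k : ℝ) - ((z : ℝ) - 1) * k) / k := by
        field_simp
      rw [Real.norm_eq_abs, heq, abs_div, abs_of_pos hkpos]
      gcongr
      rw [abs_le]
      constructor <;> linarith
    · exact tendsto_const_div_atTop_nhds_zero_nat (C : ℝ)
  have := hsq.add (tendsto_const_nhds (x := (z : ℝ) - 1))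
  simpa using this
end

section
/- The sequence S(3,1,2) is given by the closed form a(n) = n + ⌊(√(8n−7) + 3)/2⌋ for all n ≥ 1. -/
open scoped Classical

/-- closed form candidate -/
def gg (n : ℕ) : ℕ := n + (Nat.sqrt (8*n-7)+3)/2

lemma block_formula (t k : ℕ) (h1 : t*t+t < 2*k) (h2 : 2*k ≤ (t+1)*(t+2)) :
    gg k = k + t + 2 := by
  obtain ⟨r, hr0⟩ := Nat.even_mul_succ_self t
  have hr' : t*t+t = r+r := by
    have e : t*t+t = t*(t+1) := by ring
    rw [e, hr0]
  have hs1 : 2*t+1 ≤ Nat.sqrt (8*k-7) := by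
    rw [Nat.le_sqrt]
    have e : (2*t+1)*(2*t+1) = 4*(t*t+t)+1 := by ring
    rw [e]
    obtain ⟨w, hw⟩ : ∃ w, t*t+t = w := ⟨_, rfl⟩
    rw [hw] at h1 hr' ⊢; omega
  have hs2 : Nat.sqrt (8*k-7) < 2*t+3 := by
    rw [Nat.sqrt_lt]
    have e : (2*t+3)*(2*t+3) = 4*((t+1)*(t+2))+1 := by ring
    rw [e]
    obtain ⟨w, hw⟩ : ∃ w, (t+1)*(t+2) = w := ⟨_, rfl⟩
    rw [hw] at h2 ⊢; omega
  unfold gg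
  omega

lemma exists_block : ∀ k, 1 ≤ k → ∃ t, t*t+t < 2*k ∧ 2*k ≤ (t+1)*(t+2) := by
  intro k
  induction k with
  | zero => omega
  | succ n ih =>
    intro _
    rcases Nat.eq_zero_or_pos n with h|h
    · subst h; exact ⟨0, by norm_num⟩
    · obtain ⟨t, h1, h2⟩ := ih h
      by_cases hc : 2*(n+1) ≤ (t+1)*(t+2)
      · exact ⟨t, lt_of_lt_of_le h1 (by omega), hc⟩
      · exact ⟨t+1, by nlinarith, by nlinarith⟩

lemma gg_rec (k : ℕ) (hk : 2 ≤ k) :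
    gg k = gg (k-1) + if ∃ j ∈ Finset.Ico 1 k, gg j = k then 1 else 2 := by
  obtain ⟨m, rfl⟩ : ∃ m, k = m + 2 := ⟨k-2, by omega⟩
  obtain ⟨t, h1, h2⟩ := exists_block (m+2) (by omega)
  obtain ⟨s, rfl⟩ : ∃ s, t = s + 1 := by
    refine ⟨t-1, ?_⟩
    rcases Nat.eq_zero_or_pos t with h|h
    · subst h; norm_num at h2; omega
    · omega
  have hgk : gg (m+2) = m + s + 5 := by
    have := block_formula (s+1) (m+2) h1 h2; omega
  have hsub : m + 2 - 1 = m + 1 := by omega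
  rw [hsub]
  by_cases hb : (s+1)*(s+2) = 2*m + 2
  · -- boundary case: increment 2, condition false
    have hgk1 : gg (m+1) = m + s + 3 := by
      have h1' : s*s+s < 2*(m+1) := by nlinarith
      have h2' : 2*(m+1) ≤ (s+1)*(s+2) := by rw [hb]; omega
      have := block_formula s (m+1) h1' h2'; omega
    rw [if_neg, hgk, hgk1]
    rintro ⟨j, hj, hgj⟩
    simp only [Finset.mem_Ico] at hj
    obtain ⟨u, hu1, hu2⟩ := exists_block j (by omega)
    have hgj' := block_formula u j hu1 hu2
    rw [hgj] at hgj'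
    have hj2 : j + u = m := by omega
    rcases le_or_gt s u with h | h
    · nlinarith [Nat.mul_le_mul h h]
    · have h' : u + 1 ≤ s := h
      nlinarith [Nat.mul_le_mul h' h']
  · -- non-boundary: increment 1, condition true
    have hq1 : (s+1)*(s+2) < 2*m+4 := by nlinarith
    obtain ⟨r, hr⟩ := Nat.even_mul_succ_self (s+1)
    have hP : (s+1)*(s+2) ≤ 2*m := by
      obtain ⟨w, hw⟩ : ∃ w, (s+1)*(s+2) = w := ⟨_, rfl⟩
      rw [hw] at hq1 hr hb; omega
    have hgk1 : gg (m+1) = m + s + 4 := by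
      have h1' : (s+1)*(s+1)+(s+1) < 2*(m+1) := by nlinarith
      have h2' : 2*(m+1) ≤ (s+2)*(s+3) := by nlinarith
      have := block_formula (s+1) (m+1) h1' h2'; omega
    have hms : s + 1 ≤ m := by nlinarith
    rw [if_pos, hgk, hgk1]
    refine ⟨m - s, ?_, ?_⟩
    · simp only [Finset.mem_Ico]; omega
    · have key : s*s + 3*s + 2 ≤ 2*m := by nlinarith
      have key2 : 2*m ≤ s*s + 5*s + 2 := by nlinarith
      have h1' : s*s + s < 2*(m-s) := by
        obtain ⟨w, hw⟩ : ∃ w, s*s = w := ⟨_, rfl⟩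
        rw [hw] at key ⊢; omega
      have h2' : 2*(m-s) ≤ (s+1)*(s+2) := by
        have e : (s+1)*(s+2) = s*s + 3*s + 2 := by ring
        rw [e]
        obtain ⟨w, hw⟩ : ∃ w, s*s = w := ⟨_, rfl⟩
        rw [hw] at key2 ⊢; omega
      have := block_formula s (m-s) h1' h2'
      rw [this]; omega

lemma a_eq_gg (a : ℕ → ℕ) (h1 : a 1 = 3)
    (hrec : ∀ k, 2 ≤ k →
      a k = a (k - 1) + if ∃ j ∈ Finset.Ico 1 k, a j = k then 1 else 2) :
    ∀ n, 1 ≤ n → a n = gg n := by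
  intro n
  induction n using Nat.strong_induction_on with
  | _ n ih =>
    intro hn
    rcases eq_or_lt_of_le hn with h|h
    · rw [← h, h1]; decide
    · have h2n : 2 ≤ n := h
      have hcond : (∃ j ∈ Finset.Ico 1 n, a j = n) ↔ (∃ j ∈ Finset.Ico 1 n, gg j = n) := by
        constructor <;> rintro ⟨j, hj, hje⟩ <;> refine ⟨j, hj, ?_⟩ <;>
          simp only [Finset.mem_Ico] at hj
        · rw [← ih j hj.2 hj.1]; exact hje
        · rw [ih j hj.2 hj.1]; exact hje
      rw [hrec n h2n, ih (n-1) (by omega) (by omega), gg_rec n h2n]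
      by_cases hC : ∃ j ∈ Finset.Ico 1 n, gg j = n
      · rw [if_pos (hcond.mpr hC), if_pos hC]
      · rw [if_neg (fun hh => hC (hcond.mp hh)), if_neg hC]

lemma floor_part (t n : ℕ) (h1 : t*t+t < 2*n) (h2 : 2*n ≤ (t+1)*(t+2)) :
    ⌊(Real.sqrt (8*(n:ℝ) - 7) + 3)/2⌋ = (t:ℤ) + 2 := by
  have hn1 : 1 ≤ n := by nlinarith
  obtain ⟨r, hr0⟩ := Nat.even_mul_succ_self t
  have hr' : t*t+t = r+r := by
    have e : t*t+t = t*(t+1) := by ring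
    rw [e, hr0]
  have h1' : t*t+t+2 ≤ 2*n := by
    obtain ⟨w, hw⟩ : ∃ w, t*t+t = w := ⟨_, rfl⟩
    rw [hw] at hr' h1 ⊢; omega
  have h1R : (t:ℝ)*t+t+2 ≤ 2*n := by exact_mod_cast h1'
  have h2R : 2*(n:ℝ) ≤ ((t:ℝ)+1)*((t:ℝ)+2) := by exact_mod_cast h2
  have lb : (2*(t:ℝ)+1) ≤ Real.sqrt (8*(n:ℝ)-7) := by
    rw [show (2*(t:ℝ)+1) = Real.sqrt ((2*(t:ℝ)+1)^2) from (Real.sqrt_sq (by positivity)).symm]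
    apply Real.sqrt_le_sqrt
    nlinarith
  have ub : Real.sqrt (8*(n:ℝ)-7) < 2*(t:ℝ)+3 := by
    rw [Real.sqrt_lt' (by positivity)]
    nlinarith
  rw [Int.floor_eq_iff]
  constructor
  · push_cast; linarith
  · push_cast; linarith

/-- S(3,1,2) has closed form a(n) = n + ⌊(√(8n-7)+3)/2⌋. -/
theorem stmt_9 (a : ℕ → ℕ)
    (h1 : a 1 = 3)
    (hrec : ∀ k, 2 ≤ k →
      a k = a (k - 1) + if ∃ j ∈ Finset.Ico 1 k, a j = k then 1 else 2) :
    ∀ n, 1 ≤ n →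
      (a n : ℤ) = (n : ℤ) + ⌊(Real.sqrt (8 * (n : ℝ) - 7) + 3) / 2⌋ := by
  intro n hn
  obtain ⟨t, h1', h2'⟩ := exists_block n hn
  have ha := a_eq_gg a h1 hrec n hn
  have hg := block_formula t n h1' h2'
  have hf := floor_part t n h1' h2'
  rw [ha, hg, hf]
  push_cast
  ring
end

section
/- The sequence S(4,1,2) is given by the closed form a(n) = n + ⌊√(4n−3)⌋ + 2 for all n ≥ 1. -/
open scoped Classical

private lemma sqrt_eq_of' (x q : ℕ) (h1 : q * q ≤ x) (h2 : x < (q+1)*(q+1)) :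
    Nat.sqrt x = q :=
  le_antisymm (Nat.lt_succ_iff.mp (Nat.sqrt_lt.mpr h2)) (Nat.le_sqrt.mpr h1)

private lemma sqrt_basic (x : ℕ) :
    Nat.sqrt x * Nat.sqrt x ≤ x ∧ x < (Nat.sqrt x + 1) * (Nat.sqrt x + 1) := by
  constructor
  · simpa [pow_two] using Nat.sqrt_le' x
  · simpa [pow_two, Nat.succ_eq_add_one] using Nat.lt_succ_sqrt' x

/-- (A) if k is a value of f, then no jump: sqrt(4k-3) = sqrt(4k-7). -/
private lemma lemA (j k : ℕ) (hj : 1 ≤ j) (hk : j + Nat.sqrt (4*j-3) + 2 = k) :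
    Nat.sqrt (4*k-3) = Nat.sqrt (4*k-7) := by
  obtain ⟨hl, hu⟩ := sqrt_basic (4*j-3)
  revert hk hl hu
  generalize Nat.sqrt (4*j-3) = t
  intro hk hl hu
  have e1 : (t+1)*(t+1) = t*t + 2*t + 1 := by ring
  have e2 : (t+2)*(t+2) = t*t + 4*t + 4 := by ring
  have e3 : (t+2+1)*(t+2+1) = t*t + 6*t + 9 := by ring
  have h3 : Nat.sqrt (4*k-3) = t + 2 := by
    apply sqrt_eq_of' <;> omega
  have h7 : Nat.sqrt (4*k-7) = t + 2 := by
    apply sqrt_eq_of' <;> omega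
  omega

/-- (B) if no jump, then k is a value of f. -/
private lemma lemB (k : ℕ) (hk : 2 ≤ k)
    (h : Nat.sqrt (4*k-3) * Nat.sqrt (4*k-3) ≤ 4*k-7) :
    ∃ j, 1 ≤ j ∧ j + Nat.sqrt (4*j-3) + 2 = k := by
  obtain ⟨hl, hu⟩ := sqrt_basic (4*k-3)
  have hm2 : 2 ≤ Nat.sqrt (4*k-3) := Nat.le_sqrt.mpr (by omega)
  revert h hl hu hm2
  generalize Nat.sqrt (4*k-3) = m
  intro h hl hu hm2
  obtain ⟨q, rfl⟩ : ∃ q, m = q + 2 := ⟨m - 2, by omega⟩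
  have e1 : (q+2)*(q+2) = q*q + 4*q + 4 := by ring
  have e2 : (q+2+1)*(q+2+1) = q*q + 6*q + 9 := by ring
  have e3 : (q+1)*(q+1) = q*q + 2*q + 1 := by ring
  have hmk : q + 2 < k := by
    by_contra hle
    push_neg at hle
    obtain ⟨c, rfl⟩ : ∃ c, k = c + 2 := ⟨k - 2, by omega⟩
    have hmul : (c+2)*(c+2) ≤ (q+2)*(q+2) := Nat.mul_le_mul hle hle
    have e4 : (c+2)*(c+2) = c*c + 4*c + 4 := by ring
    omega
  refine ⟨k - (q+2), by omega, ?_⟩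
  have hs : Nat.sqrt (4*(k-(q+2))-3) = q := by
    apply sqrt_eq_of' <;> omega
  omega

/-- (C) in the jump case, sqrt(4k-7)+1 = sqrt(4k-3). -/
private lemma lemC (k : ℕ) (hk : 2 ≤ k)
    (h : 4*k-7 < Nat.sqrt (4*k-3) * Nat.sqrt (4*k-3)) :
    Nat.sqrt (4*k-7) + 1 = Nat.sqrt (4*k-3) := by
  obtain ⟨hl, hu⟩ := sqrt_basic (4*k-3)
  have hm2 : 2 ≤ Nat.sqrt (4*k-3) := Nat.le_sqrt.mpr (by omega)
  revert h hl hu hm2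
  generalize Nat.sqrt (4*k-3) = m
  intro h hl hu hm2
  obtain ⟨q, rfl⟩ : ∃ q, m = q + 2 := ⟨m - 2, by omega⟩
  have e1 : (q+2)*(q+2) = q*q + 4*q + 4 := by ring
  have e2 : (q+1)*(q+1) = q*q + 2*q + 1 := by ring
  have e3 : (q+1+1)*(q+1+1) = q*q + 4*q + 4 := by ring
  have e4 : (q+1+1)*(q+1+1) = (q+2)*(q+2) := by ring
  rcases Nat.eq_zero_or_pos q with rfl | hqpos
  · have hk' : k = 2 := by omega
    have : Nat.sqrt (4*k-7) = 1 := by rw [hk']; norm_num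
    omega
  · have : Nat.sqrt (4*k-7) = q + 1 := by
      apply sqrt_eq_of' <;> omega
    omega

/-- S(4,1,2) has closed form a(n) = n + ⌊√(4n-3)⌋ + 2. -/
theorem stmt_12 (a : ℕ → ℕ)
    (h1 : a 1 = 4)
    (hrec : ∀ k, 2 ≤ k →
      a k = a (k - 1) + if ∃ j ∈ Finset.Ico 1 k, a j = k then 1 else 2) :
    ∀ n, 1 ≤ n → a n = n + Nat.sqrt (4 * n - 3) + 2 := by
  intro n
  induction n using Nat.strong_induction_on with
  | _ k ih =>
    intro hk1
    rcases eq_or_lt_of_le hk1 with h | hk2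
    · rw [← h, h1]; norm_num
    · have hk2 : 2 ≤ k := hk2
      have hprev : a (k-1) = (k-1) + Nat.sqrt (4*(k-1)-3) + 2 :=
        ih (k-1) (by omega) (by omega)
      have e7 : 4*(k-1)-3 = 4*k-7 := by omega
      rw [e7] at hprev
      have hcond : (∃ j ∈ Finset.Ico 1 k, a j = k) ↔
          (∃ j, 1 ≤ j ∧ j + Nat.sqrt (4*j-3) + 2 = k) := by
        constructor
        · rintro ⟨j, hjmem, hjk⟩
          simp only [Finset.mem_Ico] at hjmem
          refine ⟨j, hjmem.1, ?_⟩
          rw [ih j hjmem.2 hjmem.1] at hjk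
          exact hjk
        · rintro ⟨j, hj1, hjk⟩
          have hjlt : j < k := by omega
          refine ⟨j, Finset.mem_Ico.mpr ⟨hj1, hjlt⟩, ?_⟩
          rw [ih j hjlt hj1]
          exact hjk
      rw [hrec k hk2]
      by_cases hc : ∃ j ∈ Finset.Ico 1 k, a j = k
      · rw [if_pos hc, hprev]
        obtain ⟨j, hj1, hjk⟩ := hcond.mp hc
        have hnj := lemA j k hj1 hjk
        rw [hnj]
        clear * - hk2
        omega
      · rw [if_neg hc, hprev]
        have hjump : 4*k-7 < Nat.sqrt (4*k-3) * Nat.sqrt (4*k-3) := by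
          by_contra h
          push_neg at h
          exact hc (hcond.mpr (lemB k hk2 h))
        have hC := lemC k hk2 hjump
        clear * - hk2 hC
        omega
end

section
/- Let g(n) = n + ⌊√(4n−3)⌋ + 2. Then for all n ≥ 2, g(n) − g(n−1) = 2 if and only if n = ⌊k²/4⌋ + 1 for some integer k ≥ 2, and g(n) − g(n−1) = 1 otherwise. -/
/-- increments of g(n) = n + ⌊√(4n-3)⌋ + 2: the increment is 2
iff n = ⌊k²/4⌋ + 1 for some k ≥ 2, and 1 otherwise. -/
theorem stmt_13 (g : ℕ → ℕ)
    (hg : ∀ n : ℕ, g n = n + Nat.sqrt (4 * n - 3) + 2) :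
    ∀ n : ℕ, 2 ≤ n →
      (g n - g (n - 1) = 2 ↔ ∃ k : ℕ, 2 ≤ k ∧ n = k ^ 2 / 4 + 1) ∧
      ((¬ ∃ k : ℕ, 2 ≤ k ∧ n = k ^ 2 / 4 + 1) → g n - g (n - 1) = 1) := by
  intro n hn
  obtain ⟨m, rfl⟩ : ∃ m, n = m + 2 := ⟨n - 2, by omega⟩
  have h1 : 4 * (m + 2) - 3 = 4 * m + 5 := by omega
  have h2 : 4 * (m + 2 - 1) - 3 = 4 * m + 1 := by omega
  obtain ⟨s, hsdef⟩ : ∃ s, Nat.sqrt (4 * m + 5) = s := ⟨_, rfl⟩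
  obtain ⟨t, htdef⟩ : ∃ t, Nat.sqrt (4 * m + 1) = t := ⟨_, rfl⟩
  have hs1 : s * s ≤ 4 * m + 5 := hsdef ▸ Nat.sqrt_le _
  have hs2 : 4 * m + 5 < (s + 1) * (s + 1) := hsdef ▸ Nat.lt_succ_sqrt _
  have ht1 : t * t ≤ 4 * m + 1 := htdef ▸ Nat.sqrt_le _
  have ht2 : 4 * m + 1 < (t + 1) * (t + 1) := htdef ▸ Nat.lt_succ_sqrt _
  have hts : t ≤ s := by
    rw [← hsdef, ← htdef]; exact Nat.sqrt_le_sqrt (by omega)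
  have ht0 : 1 ≤ t := by nlinarith
  have hst : s ≤ t + 1 := by
    by_contra h
    push_neg at h
    nlinarith
  have hgn : g (m + 2) = (m + 2) + s + 2 := by rw [hg (m + 2), h1, hsdef]
  have hgn1 : g (m + 2 - 1) = (m + 2 - 1) + t + 2 := by rw [hg (m + 2 - 1), h2, htdef]
  have hdiff : g (m + 2) - g (m + 2 - 1) = s - t + 1 := by
    rw [hgn, hgn1]; omega
  have key : s = t + 1 ↔ ∃ k : ℕ, 2 ≤ k ∧ m + 2 = k ^ 2 / 4 + 1 := by
    constructor
    · intro hseq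
      have hsl : 4 * m + 1 < s * s := by rw [hseq]; exact ht2
      rcases Nat.even_or_odd s with ⟨a, hs⟩ | ⟨a, hs⟩
      · have hsq : s * s = 4 * (a * a) := by rw [hs]; ring
        have ha : a * a = m + 1 := by omega
        have ha1 : 1 ≤ a := by
          rcases Nat.eq_zero_or_pos a with h | h
          · simp [h] at ha
          · omega
        refine ⟨2 * a, by omega, ?_⟩
        have : (2 * a) ^ 2 = 4 * (a * a) := by ring
        omega
      · have hsq : s * s = 4 * (a * a + a) + 1 := by rw [hs]; ring
        have ha : a * a + a = m + 1 := by omega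
        have ha1 : 1 ≤ a := by
          rcases Nat.eq_zero_or_pos a with h | h
          · simp [h] at ha
          · omega
        refine ⟨2 * a + 1, by omega, ?_⟩
        have : (2 * a + 1) ^ 2 = 4 * (a * a + a) + 1 := by ring
        omega
    · rintro ⟨k, hk2, hkn⟩
      rcases Nat.even_or_odd k with ⟨a, hk⟩ | ⟨a, hk⟩
      · have hksq : k ^ 2 = 4 * (a * a) := by rw [hk]; ring
        have ha : a * a = m + 1 := by omega
        have hq : (a + a) * (a + a) = 4 * (a * a) := by ring
        have hsge : a + a ≤ s := by
          rw [← hsdef]; exact Nat.le_sqrt.mpr (by omega)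
        have htlt : t < a + a := by
          by_contra hc
          push_neg at hc
          have := Nat.mul_le_mul hc hc
          omega
        omega
      · have hksq : k ^ 2 = 4 * (a * a + a) + 1 := by rw [hk]; ring
        have ha : a * a + a = m + 1 := by omega
        have hq : (2 * a + 1) * (2 * a + 1) = 4 * (a * a + a) + 1 := by ring
        have hsge : 2 * a + 1 ≤ s := by
          rw [← hsdef]; exact Nat.le_sqrt.mpr (by omega)
        have htlt : t < 2 * a + 1 := by
          by_contra hc
          push_neg at hc
          have := Nat.mul_le_mul hc hc
          omega
        omega
  constructor
  · rw [hdiff]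
    constructor
    · intro h; exact key.mp (by omega)
    · intro h; have := key.mpr h; omega
  · intro h
    have : s ≠ t + 1 := fun hs => h (key.mp hs)
    omega
end

section
/- The sequence S(1,2,4) gives the positions of the letter 0 in the fixed point of the morphism σ: 0 → 01, 1 → 1101 starting from 0. That is, a(n) = the index of the n-th occurrence of 0 in the infinite word generated by σ. -/
open scoped Classical

/-- The morphism σ: 0 → 01, 1 → 1101. -/
def sigma14 : ℕ → List ℕ
  | 0 => [0, 1]
  | _ => [1, 1, 0, 1]

/-- Finite iterates of σ starting from the single letter 0. -/
def word14 : ℕ → List ℕ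
  | 0 => [0]
  | m + 1 => (word14 m).flatMap sigma14

/-- The k-th letter (1-indexed) of the infinite fixed point of σ starting
with 0: since `word14 k` is a prefix of the fixed point of length ≥ k,
this is well defined. -/
def w14 (k : ℕ) : ℕ := (word14 k).getD (k - 1) 0

namespace Stmt14Aux

lemma flat_len (l : List ℕ) :
    (l.flatMap sigma14).length + 2 * l.count 0 = 4 * l.length := by
  induction l with
  | nil => simp
  | cons c t ih =>
    rcases c with _ | c <;>
      simp only [List.flatMap_cons, List.length_append, List.count_cons, List.length_cons,
        sigma14] at * <;> simp_all <;> omega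

lemma flat_count (l : List ℕ) : (l.flatMap sigma14).count 0 = l.length := by
  induction l with
  | nil => simp
  | cons c t ih =>
    rcases c with _ | c <;>
      simp only [List.flatMap_cons, List.count_append, List.length_cons, sigma14] at * <;>
      simp_all <;> omega

lemma flat_len_ge (l : List ℕ) : 2 * l.length ≤ (l.flatMap sigma14).length := by
  have h1 := flat_len l
  have h2 : l.count 0 ≤ l.length := List.count_le_length
  omega

lemma main_lemma (m : List ℕ) (hm : m ≠ []) :
    (m.flatMap sigma14).getD ((m.flatMap sigma14).length - 2) 0 = 0 ∧
    ((m.flatMap sigma14).take ((m.flatMap sigma14).length - 1)).count 0 = m.length := by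
  rcases (List.eq_nil_or_concat m) with rfl | ⟨m', c, rfl⟩
  · exact absurd rfl hm
  · simp only [List.concat_eq_append]
    rw [List.flatMap_append]
    have hsig : m'.flatMap sigma14 ++ [c].flatMap sigma14
        = m'.flatMap sigma14 ++ sigma14 c := by simp
    rw [hsig]
    set A := m'.flatMap sigma14 with hA
    set s := sigma14 c with hs
    have hprop : 2 ≤ s.length ∧ s.getD (s.length - 2) 0 = 0 ∧
        (s.take (s.length - 1)).count 0 = 1 := by
      rcases c with _ | c <;> simp [hs, sigma14] <;> decide
    obtain ⟨hs2, hsg, hsc⟩ := hprop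
    have hlen : (A ++ s).length = A.length + s.length := List.length_append
    constructor
    · rw [hlen]
      have h1 : A.length + s.length - 2 = A.length + (s.length - 2) := by omega
      rw [h1, List.getD_append_right A s 0 _ (by omega)]
      have h2 : A.length + (s.length - 2) - A.length = s.length - 2 := by omega
      rw [h2]; exact hsg
    · rw [hlen]
      have h1 : A.length + s.length - 1 = A.length + (s.length - 1) := by omega
      rw [h1, List.take_append]
      have h2 : A.take (A.length + (s.length - 1)) = A := List.take_of_length_le (by omega)
      have h3 : A.length + (s.length - 1) - A.length = s.length - 1 := by omega
      rw [h2, h3, List.count_append, hsc, flat_count]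
      simp

lemma key (l : List ℕ) (n q : ℕ) (h1 : 1 ≤ n) (h2 : n ≤ l.length)
    (hq : q + 2 + 2 * ((l.take n).count 0) = 4 * n) :
    (l.flatMap sigma14).getD q 0 = 0 ∧
    ((l.flatMap sigma14).take (q + 1)).count 0 = n := by
  have hsplit : l.take n ++ l.drop n = l := List.take_append_drop n l
  have hml : (l.take n).length = n := by rw [List.length_take]; omega
  have hmne : l.take n ≠ [] := by
    intro h; rw [h] at hml; simp at hml; omega
  obtain ⟨hg, hc⟩ := main_lemma _ hmne
  have hlenA := flat_len (l.take n)
  have hge := flat_len_ge (l.take n)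
  rw [hml] at hlenA hge hc
  rw [← hsplit, List.flatMap_append]
  set A := (l.take n).flatMap sigma14 with hA
  set B := (l.drop n).flatMap sigma14 with hB
  have hqA : q = A.length - 2 := by omega
  have hA2 : 2 ≤ A.length := by omega
  constructor
  · rw [List.getD_append A B 0 q (by omega), hqA]
    exact hg
  · rw [List.take_append]
    have h3 : A.take (q + 1) = A.take (A.length - 1) := by rw [hqA]; congr 1; omega
    have h4 : q + 1 - A.length = 0 := by omega
    rw [h3, h4, List.take_zero, List.count_append, hc]
    simp

lemma word_len (m : ℕ) : m + 1 ≤ (word14 m).length := by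
  induction m with
  | zero => simp [word14]
  | succ m ih =>
    have := flat_len_ge (word14 m)
    rw [word14]
    omega

lemma word_pref (m : ℕ) : word14 m <+: word14 (m + 1) := by
  induction m with
  | zero => exact ⟨[1], rfl⟩
  | succ m ih =>
    obtain ⟨t, ht⟩ := ih
    rw [word14, word14]
    exact ⟨t.flatMap sigma14, by rw [← List.flatMap_append, ht]⟩

lemma word_pref_le {m n : ℕ} (h : m ≤ n) : word14 m <+: word14 n := by
  induction n with
  | zero => rw [Nat.le_zero.mp h]
  | succ n ih =>
    rcases Nat.lt_or_ge m (n + 1) with h' | h'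
    · exact (ih (by omega)).trans (word_pref n)
    · rw [Nat.le_antisymm h h']

lemma take_stable (n N : ℕ) (h : n ≤ N) :
    (word14 N).take n = (word14 n).take n := by
  obtain ⟨t, ht⟩ := word_pref_le h
  rw [← ht, List.take_append]
  have h1 : n - (word14 n).length = 0 := by have := word_len n; omega
  simp [h1]

lemma getD_stable (i N : ℕ) (h : i < N) :
    (word14 N).getD i 0 = (word14 (i + 1)).getD i 0 := by
  obtain ⟨t, ht⟩ := word_pref_le (show i + 1 ≤ N from h)
  rw [← ht, List.getD_append]
  have := word_len (i + 1); omega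

/-- Number of zeros among the first n letters of the fixed point. -/
def Z (n : ℕ) : ℕ := ((word14 n).take n).count 0

/-- The i-th letter (0-indexed) of the fixed point. -/
def W (i : ℕ) : ℕ := (word14 (i + 1)).getD i 0

/-- Position (1-indexed) of the n-th zero. -/
def p (n : ℕ) : ℕ := 4 * n - 2 - 2 * Z n + 1

lemma Z_le (n : ℕ) : Z n ≤ n :=
  le_trans List.count_le_length (by simp)

lemma p_pos (n : ℕ) : 1 ≤ p n := by unfold p; omega

lemma Z_succ (n : ℕ) : Z (n + 1) = Z n + if W n = 0 then 1 else 0 := by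
  unfold Z W
  rw [← take_stable n (n + 1) (by omega)]
  have hn : n < (word14 (n + 1)).length := by have := word_len (n + 1); omega
  rw [List.take_succ, List.getElem?_eq_getElem hn, List.getD_eq_getElem _ _ hn,
    Option.toList_some, List.count_append]
  by_cases h : (word14 (n + 1))[n] = 0 <;>
    simp [h, List.count_singleton']

lemma Z_mono {n m : ℕ} (h : n ≤ m) : Z n ≤ Z m := by
  induction m with
  | zero => rw [Nat.le_zero.mp h]
  | succ m ih =>
    rcases Nat.lt_or_ge n (m + 1) with h' | h'
    · have := ih (by omega)
      have h2 := Z_succ m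
      split at h2 <;> omega
    · rw [Nat.le_antisymm h h']

lemma p_zero_and_count (n : ℕ) (hn : 1 ≤ n) : W (p n - 1) = 0 ∧ Z (p n) = n := by
  set N := 4 * n with hN
  have hzle := Z_le n
  have hln : n ≤ (word14 N).length := by have := word_len N; omega
  have hzz : ((word14 N).take n).count 0 = Z n := by
    rw [take_stable n N (by omega)]; rfl
  set q := 4 * n - 2 - 2 * Z n with hq
  have hqe : q + 2 + 2 * (((word14 N).take n).count 0) = 4 * n := by rw [hzz]; omega
  obtain ⟨hA, hB⟩ := key (word14 N) n q hn hln hqe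
  have hflat : word14 (N + 1) = (word14 N).flatMap sigma14 := by rw [word14]
  have hpq : p n = q + 1 := rfl
  have hpq1 : p n - 1 = q := by rw [hpq]; omega
  constructor
  · rw [hpq1]
    unfold W
    rw [← getD_stable q (N + 1) (by omega), hflat]
    exact hA
  · rw [hpq]
    unfold Z
    rw [← take_stable (q + 1) (N + 1) (by omega), hflat]
    exact hB

lemma p_one : p 1 = 1 := by decide

lemma p_succ (n : ℕ) (hn : 1 ≤ n) : p (n + 1) = p n + if W n = 0 then 2 else 4 := by
  have h1 := Z_succ n
  have h2 := Z_le n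
  have h3 := Z_le (n + 1)
  unfold p
  by_cases h : W n = 0
  · rw [if_pos h] at h1 ⊢; omega
  · rw [if_neg h] at h1 ⊢; omega

lemma p_ge (n : ℕ) : 2 * n - 1 ≤ p n := by
  have := Z_le n; unfold p; omega

lemma Z_pos_of_W (k : ℕ) (hk : 1 ≤ k) (h0 : W (k - 1) = 0) : Z k = Z (k - 1) + 1 := by
  have h2 := Z_succ (k - 1)
  rw [h0] at h2
  simp at h2
  have h3 : (k - 1) + 1 = k := by omega
  rw [h3] at h2
  exact h2

lemma pos_unique (k : ℕ) (hk : 1 ≤ k) (h0 : W (k - 1) = 0) : p (Z k) = k := by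
  have hZk := Z_pos_of_W k hk h0
  set z := Z k with hz
  have hz1 : 1 ≤ z := by omega
  obtain ⟨hW, hZ⟩ := p_zero_and_count z hz1
  rcases lt_trichotomy (p z) k with h | h | h
  · have := Z_mono (show p z ≤ k - 1 by omega)
    omega
  · exact h
  · have hp1 := p_pos z
    have hZp := Z_pos_of_W (p z) hp1 hW
    have := Z_mono (show k ≤ p z - 1 by omega)
    omega

lemma bridge (M : ℕ) :
    ((Finset.Icc 1 M).filter (fun j => w14 j = 0)).card = Z M := by
  induction M with
  | zero => simp [Z]
  | succ M ih =>
    rw [← Finset.insert_Icc_right_eq_Icc_add_one (by omega : 1 ≤ M + 1), Finset.filter_insert, Z_succ]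
    have hw : w14 (M + 1) = W M := rfl
    have hnm : (M + 1) ∉ (Finset.Icc 1 M).filter (fun j => w14 j = 0) := by
      intro h
      have := Finset.mem_of_mem_filter _ h
      simp at this
    by_cases h : W M = 0
    · rw [if_pos (by rw [hw]; exact h), if_pos h, Finset.card_insert_of_notMem hnm, ih]
    · rw [if_neg (by rw [hw]; exact h), if_neg h, ih]
      simp

end Stmt14Aux

open Stmt14Aux in
/-- S(1,2,4) gives the positions of the letter 0 in the
fixed point of σ: 0 → 01, 1 → 1101 starting from 0. -/
theorem stmt_14 (a : ℕ → ℕ)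
    (h1 : a 1 = 1)
    (hrec : ∀ k, 2 ≤ k →
      a k = a (k - 1) + if ∃ j ∈ Finset.Ico 1 k, a j = k then 2 else 4) :
    ∀ n, 1 ≤ n →
      w14 (a n) = 0 ∧
      ((Finset.Icc 1 (a n)).filter (fun j => w14 j = 0)).card = n := by
  have key2 : ∀ n, 1 ≤ n → a n = p n := by
    intro n
    induction n using Nat.strong_induction_on with
    | _ n ih =>
      intro hn
      rcases eq_or_lt_of_le hn with h1' | h2'
      · rw [← h1', h1, p_one]
      · have hk : 2 ≤ n := h2'
        have hcond : (∃ j ∈ Finset.Ico 1 n, a j = n) ↔ W (n - 1) = 0 := by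
          constructor
          · rintro ⟨j, hj, hja⟩
            rw [Finset.mem_Ico] at hj
            rw [ih j hj.2 hj.1] at hja
            obtain ⟨hW, _⟩ := p_zero_and_count j hj.1
            rw [hja] at hW
            exact hW
          · intro hW
            have hpu := pos_unique n (by omega) hW
            have hz1 : 1 ≤ Z n := by
              rcases Nat.eq_zero_or_pos (Z n) with h | h
              · rw [h] at hpu
                have : p 0 = 1 := by decide
                omega
              · exact h
            have hge := p_ge (Z n)
            have hlt : Z n < n := by omega
            exact ⟨Z n, Finset.mem_Ico.mpr ⟨hz1, hlt⟩, by rw [ih (Z n) hlt hz1, hpu]⟩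
        have hps := p_succ (n - 1) (by omega)
        have hn1 : (n - 1) + 1 = n := by omega
        rw [hn1] at hps
        rw [hrec n hk, ih (n - 1) (by omega) (by omega), hps]
        congr 1
        by_cases hc : W (n - 1) = 0
        · rw [if_pos hc, if_pos (hcond.mpr hc)]
        · rw [if_neg hc, if_neg (fun hx => hc (hcond.mp hx))]
  intro n hn
  rw [key2 n hn]
  obtain ⟨hW, hZ⟩ := p_zero_and_count n hn
  refine ⟨?_, ?_⟩
  · have hp1 := p_pos n
    have h3 : (p n - 1) + 1 = p n := by omega
    unfold W at hW
    rw [h3] at hW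
    unfold w14
    exact hW
  · rw [bridge (p n), hZ]
end

section
/- Let α be an irrational number with Z < α < Z+1 for an integer Z ≥ 2, satisfying α² = Zα + 1 (i.e., α = r_A), and let a(n) = ⌈nα⌉. Then for every k ≥ 2, a(k) − a(k−1) ∈ {Z, Z+1}, and a(k) − a(k−1) = Z+1 if and only if k belongs to the image {a(n) : n ≥ 1}. -/
/-- for α = (Z+√(Z²+4))/2 (Z ≥ 2) and a(n) = ⌈nα⌉, the
increments lie in {Z, Z+1}, and the increment at k is Z+1 iff k is in
the image of a. -/
theorem stmt_17 (Z : ℤ) (hZ : 2 ≤ Z) (α : ℝ)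
    (hα : α = ((Z : ℝ) + Real.sqrt ((Z : ℝ) ^ 2 + 4)) / 2)
    (a : ℕ → ℤ) (ha : ∀ n : ℕ, a n = ⌈(n : ℝ) * α⌉) :
    ∀ k : ℕ, 2 ≤ k →
      (a k - a (k - 1) = Z ∨ a k - a (k - 1) = Z + 1) ∧
      (a k - a (k - 1) = Z + 1 ↔ ∃ n : ℕ, 1 ≤ n ∧ a n = (k : ℤ)) := by
  have hZR : (2:ℝ) ≤ (Z:ℝ) := by exact_mod_cast hZ
  set s := Real.sqrt ((Z : ℝ) ^ 2 + 4) with hsdef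
  have hs : s ^ 2 = (Z:ℝ)^2 + 4 := Real.sq_sqrt (by positivity)
  have hsnn : 0 ≤ s := Real.sqrt_nonneg _
  have hZs : (Z:ℝ) < s := by nlinarith
  have hsZ2 : s < (Z:ℝ) + 2 := by nlinarith
  have hαgt : (Z:ℝ) < α := by rw [hα]; linarith
  have hαlt : α < (Z:ℝ) + 1 := by rw [hα]; linarith
  have hαpos : 0 < α := by linarith
  have hquad : α ^ 2 = Z * α + 1 := by rw [hα]; field_simp; nlinarith
  -- irrationality of s
  have hsirr : Irrational s := by
    apply irrational_nrt_of_notint_nrt 2 (Z^2+4)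
    · push_cast; rw [hs]
    · rintro ⟨y, hy⟩
      have hy2 : y^2 = Z^2 + 4 := by
        have : ((y:ℝ))^2 = ((Z:ℝ))^2 + 4 := by rw [← hy]; exact hs
        exact_mod_cast this
      have h1 : Z < y := by exact_mod_cast hy ▸ hZs
      have h2 : y < Z + 2 := by exact_mod_cast hy ▸ hsZ2
      have : y = Z + 1 := by omega
      subst this
      nlinarith
    · norm_num
  have hαirr : Irrational α := by
    rw [hα]
    have h1 : Irrational ((Z:ℝ) + s) := hsirr.intCast_add Z
    have := h1.div_intCast (m := 2) (by norm_num)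
    simpa using this
  set β := α - Z with hβ
  have hβirr : Irrational β := hαirr.sub_intCast Z
  have hβpos : 0 < β := by rw [hβ]; linarith
  have hβlt : β < 1 := by rw [hβ]; linarith
  have hinv : β = 1 / α := by
    rw [hβ]
    field_simp
    nlinarith
  -- ceiling of an irrational is floor + 1
  have floor_lt : ∀ x : ℝ, Irrational x → (⌊x⌋ : ℝ) < x := by
    intro x hx
    exact (Int.floor_le x).lt_of_ne (fun h => (hx.ne_int ⌊x⌋) h.symm)
  have ceil_eq : ∀ x : ℝ, Irrational x → ⌈x⌉ = ⌊x⌋ + 1 := by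
    intro x hx
    rw [Int.ceil_eq_iff]
    constructor
    · push_cast; linarith [floor_lt x hx]
    · push_cast; linarith [Int.lt_floor_add_one x]
  have haval : ∀ n : ℕ, 1 ≤ n → a n = n * Z + ⌊(n:ℝ) * β⌋ + 1 := by
    intro n hn
    have hirr_n : Irrational ((n:ℝ) * α) := by
      have := hαirr.natCast_mul (m := n) (by omega)
      simpa using this
    rw [ha n, ceil_eq _ hirr_n]
    have h1 : (n:ℝ) * α = ((n * Z : ℤ) : ℝ) + (n:ℝ) * β := by push_cast [hβ]; ring
    rw [h1, Int.floor_intCast_add]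
  intro k hk
  have hck : ((k - 1 : ℕ) : ℝ) = (k:ℝ) - 1 := by
    have : (1:ℕ) ≤ k := by omega
    push_cast [Nat.cast_sub this]
    ring
  have hckZ : ((k - 1 : ℕ) : ℤ) = (k:ℤ) - 1 := by
    have : (1:ℕ) ≤ k := by omega
    push_cast [Nat.cast_sub this]
    ring
  set x1 := ((k:ℝ) - 1) * β with hx1def
  set x2 := (k:ℝ) * β with hx2def
  have hx2irr : Irrational x2 := by
    have := hβirr.natCast_mul (m := k) (by omega)
    simpa [hx2def] using this
  have hx1irr : Irrational x1 := by
    have := hβirr.natCast_mul (m := k - 1) (by omega)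
    rw [hck] at this
    simpa [hx1def] using this
  have hd0 : ⌊x1⌋ ≤ ⌊x2⌋ := by
    apply Int.floor_mono
    rw [hx1def, hx2def]
    nlinarith
  have hd1 : ⌊x2⌋ ≤ ⌊x1⌋ + 1 := by
    have hle : x2 ≤ x1 + 1 := by rw [hx1def, hx2def]; nlinarith
    calc ⌊x2⌋ ≤ ⌊x1 + 1⌋ := Int.floor_mono hle
      _ = ⌊x1⌋ + 1 := by rw [Int.floor_add_one]
  have hdiff : a k - a (k - 1) = Z + (⌊x2⌋ - ⌊x1⌋) := by
    rw [haval k (by omega), haval (k-1) (by omega), hck, hckZ]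
    ring
  -- key characterization via an integer point
  have hkR2 : (2:ℝ) ≤ (k:ℝ) := by exact_mod_cast hk
  constructor
  · omega
  rw [hdiff]
  constructor
  · intro h
    have hjd : ⌊x2⌋ = ⌊x1⌋ + 1 := by omega
    set j := ⌊x2⌋ with hj
    have hjlt : (j:ℝ) < x2 := floor_lt x2 hx2irr
    have hjgt : x1 < (j:ℝ) := by
      rw [hjd]
      push_cast
      linarith [Int.lt_floor_add_one x1]
    have hjpos : 1 ≤ j := by
      have hx1pos : 0 < x1 := by rw [hx1def]; nlinarith
      have : (0:ℝ) < (j:ℝ) := lt_trans hx1pos hjgt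
      exact_mod_cast this
    refine ⟨j.toNat, by omega, ?_⟩
    have hcastj : ((j.toNat : ℕ) : ℝ) = (j:ℝ) := by
      exact_mod_cast congrArg (fun z : ℤ => (z:ℝ)) (Int.toNat_of_nonneg (by omega : (0:ℤ) ≤ j))
    rw [ha, Int.ceil_eq_iff]
    have hx1eq : x1 = ((k:ℝ) - 1) / α := by
      rw [hx1def, hinv]; ring
    have hx2eq : x2 = (k:ℝ) / α := by
      rw [hx2def, hinv]; ring
    rw [hx1eq] at hjgt
    rw [hx2eq] at hjlt
    rw [div_lt_iff₀ hαpos] at hjgt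
    rw [lt_div_iff₀ hαpos] at hjlt
    constructor
    · push_cast
      rw [hcastj]
      linarith
    · push_cast
      rw [hcastj]
      linarith
  · rintro ⟨n, hn1, hank⟩
    rw [ha] at hank
    rw [Int.ceil_eq_iff] at hank
    obtain ⟨hlo, hhi⟩ := hank
    have hirr_n : Irrational ((n:ℝ) * α) := by
      have := hαirr.natCast_mul (m := n) (by omega)
      simpa using this
    have hhi' : (n:ℝ) * α < (k:ℝ) := lt_of_le_of_ne hhi (by
      intro h
      exact (hirr_n.ne_int (k:ℤ)) (by push_cast; exact h))
    have hlo' : ((k:ℝ) - 1) < (n:ℝ) * α := by push_cast at hlo; linarith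
    -- convert to x1 < n < x2
    have hnx2 : (n:ℝ) < x2 := by
      rw [hx2def, hinv]
      rw [mul_one_div, lt_div_iff₀ hαpos]
      linarith
    have hnx1 : x1 < (n:ℝ) := by
      rw [hx1def, hinv]
      rw [mul_one_div, div_lt_iff₀ hαpos]
      linarith
    have h1 : (⌊x1⌋ : ℤ) < (n:ℤ) := Int.floor_lt.2 (by exact_mod_cast hnx1)
    have h2 : (n:ℤ) ≤ ⌊x2⌋ := Int.le_floor.2 (by exact_mod_cast hnx2.le)
    omega
end

section
/- For the sequence S(x,0,z) with z ≥ 2, the increment sequence Δa(k) = a(k) − a(k−1) is eventually periodic with period z: there exists K such that Δa(k) = Δa(k−z) for all k ≥ K, and within each period exactly one increment equals 0 and z−1 increments equal z. -/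
open scoped Classical

/-- for S(x,0,z) with z ≥ 2, the increments Δa(k) are
eventually periodic with period z, and in each period exactly one increment
is 0 and z−1 increments equal z. -/
theorem stmt_19 (x z : ℕ) (hz : 2 ≤ z) (a : ℕ → ℕ)
    (h1 : a 1 = x)
    (hrec : ∀ k, 2 ≤ k →
      a k = a (k - 1) + if ∃ j ∈ Finset.Ico 1 k, a j = k then 0 else z) :
    ∃ K : ℕ, (∀ k, K ≤ k → a k - a (k - 1) = a (k - z) - a (k - z - 1)) ∧
      ∀ k, K ≤ k →
        ((Finset.Ico k (k + z)).filter (fun j => a j - a (j - 1) = 0)).card = 1 ∧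
        ((Finset.Ico k (k + z)).filter (fun j => a j - a (j - 1) = z)).card = z - 1 := by
  have hstep : ∀ k, 2 ≤ k → a k = a (k-1) ∨ a k = a (k-1) + z := by
    intro k hk
    rw [hrec k hk]
    by_cases h : ∃ j ∈ Finset.Ico 1 k, a j = k
    · left; rw [if_pos h, Nat.add_zero]
    · right; rw [if_neg h]
  have hmono : ∀ j k, 1 ≤ j → j ≤ k → a j ≤ a k := by
    intro j k hj hjk
    induction k, hjk using Nat.le_induction with
    | base => exact le_refl _
    | succ n hn ih =>
      have h2 : 2 ≤ n + 1 := by omega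
      have h := hstep (n+1) h2
      simp only [Nat.add_sub_cancel] at h
      rcases h with h | h <;> omega
  have hmod : ∀ k, 1 ≤ k → a k % z = x % z := by
    intro k hk
    induction k, hk using Nat.le_induction with
    | base => rw [h1]
    | succ n hn ih =>
      have h2 : 2 ≤ n + 1 := by omega
      have h := hstep (n+1) h2
      simp only [Nat.add_sub_cancel] at h
      rcases h with h | h <;> rw [h]
      · exact ih
      · rw [Nat.add_mod_right]; exact ih
  have hstay : ∀ k, (∃ j ∈ Finset.Ico 1 k, a j = k) → k % z = x % z ∧ x ≤ k := by
    rintro k ⟨j, hj, hjk⟩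
    rw [Finset.mem_Ico] at hj
    refine ⟨by rw [← hjk]; exact hmod j hj.1, ?_⟩
    rw [← hjk, ← h1]
    exact hmono 1 j le_rfl hj.1
  -- step lemma for eventual attainment
  have hPstep : ∀ m, (∃ j, 1 ≤ j ∧ j < x + m * z ∧ a j = x + m * z) →
      (∃ j, 1 ≤ j ∧ j < x + (m+1) * z ∧ a j = x + (m+1) * z) := by
    rintro m ⟨j, hj1, hjlt, hjv⟩
    have h2 : 2 ≤ j + 1 := by omega
    have hr1 := hrec (j+1) h2
    simp only [Nat.add_sub_cancel] at hr1
    have hmz : x + m * z + z = x + (m+1) * z := by ring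
    by_cases hs1 : ∃ i ∈ Finset.Ico 1 (j+1), a i = j + 1
    · rw [if_pos hs1] at hr1
      have hmod1 := (hstay _ hs1).1
      have h3 : 2 ≤ j + 2 := by omega
      have hr2 := hrec (j+2) h3
      simp only [show j + 2 - 1 = j + 1 from rfl] at hr2
      by_cases hs2 : ∃ i ∈ Finset.Ico 1 (j+2), a i = j + 2
      · exfalso
        have hmod2 := (hstay _ hs2).1
        have heq : (j + 1) % z = (j + 2) % z := by rw [hmod1, hmod2]
        have hdvd : z ∣ (j + 2) - (j + 1) := (Nat.modEq_iff_dvd' (by omega)).mp heq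
        have : z ∣ 1 := by simpa using hdvd
        have := Nat.le_of_dvd one_pos this
        omega
      · rw [if_neg hs2] at hr2
        refine ⟨j+2, by omega, ?_, by rw [hr2, hr1, hjv]; ring⟩
        have : j + 2 < x + m * z + z := by linarith
        linarith [hmz]
    · rw [if_neg hs1] at hr1
      refine ⟨j+1, by omega, ?_, by rw [hr1, hjv]; ring⟩
      have : j + 1 < x + m * z + z := by linarith
      linarith [hmz]
  -- base: some value is attained before its own index
  have hPbase : ∃ m, ∃ j, 1 ≤ j ∧ j < x + m * z ∧ a j = x + m * z := by
    by_contra hc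
    push_neg at hc
    have hnostay : ∀ k, ¬ ∃ i ∈ Finset.Ico 1 k, a i = k := by
      intro k hex
      obtain ⟨hmodk, hxk⟩ := hstay k hex
      obtain ⟨i, hi, hik⟩ := hex
      rw [Finset.mem_Ico] at hi
      have hdvd : z ∣ k - x := (Nat.modEq_iff_dvd' hxk).mp hmodk.symm
      obtain ⟨m, hm⟩ := hdvd
      have h' : k - x + x = k := Nat.sub_add_cancel hxk
      rw [hm, mul_comm] at h'
      have hkeq : k = x + m * z := by linarith
      exact hc m i hi.1 (by rw [← hkeq]; exact hi.2) (by rw [← hkeq]; exact hik)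
    have hlin : ∀ k, 1 ≤ k → a k = x + (k-1) * z := by
      intro k hk
      induction k, hk using Nat.le_induction with
      | base => simpa using h1
      | succ n hn ih =>
        have h2 : 2 ≤ n + 1 := by omega
        have hr := hrec (n+1) h2
        rw [if_neg (hnostay (n+1))] at hr
        simp only [Nat.add_sub_cancel] at hr ⊢
        obtain ⟨n', rfl⟩ : ∃ n', n = n' + 1 := ⟨n-1, by omega⟩
        rw [hr, ih]
        simp only [Nat.add_sub_cancel]
        ring
    have hbig : a (x + 2*z + 1) = x + (x + 2*z) * z := by
      rw [hlin (x + 2*z + 1) (by omega)]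
      simp
    refine hc (x + 2*z) (x + 2*z + 1) (by omega) ?_ hbig
    nlinarith
  obtain ⟨m₀, hm₀⟩ := hPbase
  have hPall : ∀ m, m₀ ≤ m → ∃ j, 1 ≤ j ∧ j < x + m * z ∧ a j = x + m * z := by
    intro m hm
    induction m, hm using Nat.le_induction with
    | base => exact hm₀
    | succ n hn ih => exact hPstep n ih
  obtain ⟨B, hB⟩ : ∃ B, B = x + m₀ * z + 2 := ⟨_, rfl⟩
  have hB2 : 2 ≤ B := by rw [hB]; omega
  have hBx : x < B := by rw [hB]; omega
  -- characterization of increments beyond B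
  have hchar : ∀ k, B ≤ k → a k = a (k-1) + (if k % z = x % z then 0 else z) := by
    intro k hk
    have h2 : 2 ≤ k := le_trans hB2 hk
    rw [hrec k h2]
    by_cases hs : ∃ i ∈ Finset.Ico 1 k, a i = k
    · rw [if_pos hs, if_pos (hstay k hs).1]
    · rw [if_neg hs, if_neg]
      intro hmodk
      apply hs
      have hxk : x ≤ k := le_of_lt (lt_of_lt_of_le hBx hk)
      have hdvd : z ∣ k - x := (Nat.modEq_iff_dvd' hxk).mp hmodk.symm
      obtain ⟨m, hm⟩ := hdvd
      have h' : k - x + x = k := Nat.sub_add_cancel hxk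
      rw [hm, mul_comm] at h'
      have hkeq : k = x + m * z := by linarith
      have hmm : m₀ ≤ m := by
        by_contra hlt
        push_neg at hlt
        have : m * z ≤ m₀ * z := Nat.mul_le_mul_right z (le_of_lt hlt)
        rw [hB] at hk
        linarith [hkeq]
      obtain ⟨j, hj1, hjlt, hjv⟩ := hPall m hmm
      exact ⟨j, Finset.mem_Ico.mpr ⟨hj1, by rw [hkeq]; exact hjlt⟩, by rw [hjv, hkeq]⟩
  have hΔ : ∀ k, B ≤ k → a k - a (k-1) = if k % z = x % z then 0 else z := by
    intro k hk
    rw [hchar k hk, Nat.add_sub_cancel_left]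
  refine ⟨B + z, ?_, ?_⟩
  · intro k hk
    have hzk : z ≤ k := by omega
    rw [hΔ k (by omega), hΔ (k-z) (by omega)]
    have e : (k - z) % z = k % z := by
      conv_rhs => rw [← Nat.sub_add_cancel hzk]
      rw [Nat.add_mod_right]
    rw [e]
  · intro k hk
    have hzpos : 0 < z := by omega
    have hone : ((Finset.Ico k (k+z)).filter (fun j => a j - a (j - 1) = 0)) =
        (Finset.Ico k (k+z)).filter (fun j => j ≡ x [MOD z]) := by
      apply Finset.filter_congr
      intro j hj
      rw [Finset.mem_Ico] at hj
      rw [hΔ j (by omega)]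
      unfold Nat.ModEq
      split_ifs with h
      · simp [h]
      · simp [h]
        omega
    have hc1 : ((Finset.Ico k (k+z)).filter (fun j => a j - a (j - 1) = 0)).card = 1 := by
      rw [hone]
      have hcard := Nat.Ico_filter_modEq_card k (k+z) hzpos x
      have e1 : ((k + z : ℕ) : ℚ) - (x : ℚ) = ((k : ℚ) - x) + z := by push_cast; ring
      rw [e1, add_div, div_self (by positivity : (z:ℚ) ≠ 0), Int.ceil_add_one] at hcard
      have : (((Finset.Ico k (k+z)).filter (fun j => j ≡ x [MOD z])).card : ℤ) = 1 := by
        rw [hcard]; omega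
      exact_mod_cast this
    refine ⟨hc1, ?_⟩
    have htwo : ((Finset.Ico k (k+z)).filter (fun j => a j - a (j - 1) = z)) =
        (Finset.Ico k (k+z)).filter (fun j => ¬ (a j - a (j - 1) = 0)) := by
      apply Finset.filter_congr
      intro j hj
      rw [Finset.mem_Ico] at hj
      rw [hΔ j (by omega)]
      split_ifs with h <;> simp <;> omega
    rw [htwo]
    have hsum := Finset.card_filter_add_card_filter_not
      (s := Finset.Ico k (k+z)) (p := fun j => a j - a (j - 1) = 0)
    rw [Nat.card_Ico] at hsum
    have hkk : k + z - k = z := by omega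
    rw [hkk] at hsum
    omega
end
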